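/- arXiv:2506.09767 — 5 statements merged into one kernel-verified Lean document; each statement's English description precedes it below -/
import Mathlib

section
/- Let r ≥ 2 and 1 ≤ s_1 ≤ … ≤ s_r be integers, s = s_1 + ⋯ + s_r, and let H be a K_{s_1,…,s_r}-saturated graph. Let a, b, c, g be positive integers with g = 4^a and b = (c−1)·g^{(c−1)g^c + 1} + (c−1)·g^c + 2. Let B be an independent set in H such that |B| = b and deg_H(v) ≤ a for every vertex v ∈ B. Then there exists a subset C ⊆ B with |C| = c and |N_H(C)| ≥ s − s_r − 1. -/
open SimpleGraph

/-- `F` has a copy in `G`, i.e. `G` has a subgraph isomorphic to `F`: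
there is an injective graph homomorphism from `F` to `G`. -/
def HasCopy {α : Type*} {β : Type*} (F : SimpleGraph α) (G : SimpleGraph β) : Prop :=
  ∃ f : F →g G, Function.Injective f

/-- `G` is `F`-saturated: `G` is `F`-free and adding any edge between two
distinct nonadjacent vertices creates a subgraph isomorphic to `F`. -/
def IsSat {α : Type*} {β : Type*} (F : SimpleGraph α) (G : SimpleGraph β) : Prop :=
  ¬ HasCopy F G ∧
    ∀ x y : β, x ≠ y → ¬ G.Adj x y → HasCopy F (G ⊔ fromEdgeSet {s(x, y)})

/-- `sat(n, F)`: the minimum number of edges in an `F`-saturated graph on `n` vertices. -/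
noncomputable def satNumber {α : Type*} (F : SimpleGraph α) (n : ℕ) : ℕ :=
  sInf {m : ℕ | ∃ G : SimpleGraph (Fin n), IsSat F G ∧ G.edgeSet.ncard = m}

/-- `N_H(W)`: the set of vertices adjacent to all vertices of `W`. -/
def commonNbrs {V : Type*} (H : SimpleGraph V) (W : Set V) : Set V :=
  {v : V | ∀ u ∈ W, H.Adj u v}

set_option linter.unusedSectionVars false

namespace BCN

open Finset

variable {V : Type} [Fintype V] [DecidableEq V]
variable {r : ℕ} {s : Fin r → ℕ}

/-- The complete multipartite graph with parts `Fin (s i)`. -/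
abbrev MP (s : Fin r → ℕ) : SimpleGraph (Σ i : Fin r, Fin (s i)) :=
  completeMultipartiteGraph (fun i : Fin r => Fin (s i))

lemma mp_adj {p q : Σ i : Fin r, Fin (s i)} : (MP s).Adj p q ↔ p.1 ≠ q.1 := by
  simp [MP]

/-- Neighborhood as a Finset. -/
def nb (H : SimpleGraph V) [DecidableRel H.Adj] (v : V) : Finset V :=
  univ.filter (H.Adj v)

lemma mem_nb {H : SimpleGraph V} [DecidableRel H.Adj] {v w : V} :
    w ∈ nb H v ↔ H.Adj v w := by simp [nb]

lemma nb_card {H : SimpleGraph V} [DecidableRel H.Adj] (v : V) :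
    (nb H v).card = (H.neighborSet v).ncard := by
  have : H.neighborSet v = ↑(nb H v) := by
    ext w; simp [nb, SimpleGraph.mem_neighborSet]
  rw [this, Set.ncard_coe_finset]

/-- Structured data of a copy of `MP s` in `H` plus the single edge `x y`:
all cross-part pairs are adjacent in `H` except possibly the pair `(x, y)`. -/
structure PCopy (H : SimpleGraph V) (s : Fin r → ℕ) (x y : V) : Type where
  f : (Σ i : Fin r, Fin (s i)) → V
  inj : Function.Injective f
  ix : Fin r
  iy : Fin r
  px : Fin (s ix)
  py : Fin (s iy)
  hfx : f ⟨ix, px⟩ = x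
  hfy : f ⟨iy, py⟩ = y
  hixy : ix ≠ iy
  hne : x ≠ y
  adj : ∀ p q : (Σ i : Fin r, Fin (s i)), p.1 ≠ q.1 →
    H.Adj (f p) (f q) ∨ (f p = x ∧ f q = y) ∨ (f p = y ∧ f q = x)

lemma exists_pcopy {H : SimpleGraph V} (hsat : IsSat (MP s) H) {x y : V}
    (hxy : x ≠ y) (hna : ¬ H.Adj x y) : Nonempty (PCopy H s x y) := by
  obtain ⟨f, finj⟩ := hsat.2 x y hxy hna
  have hadj : ∀ p q : (Σ i : Fin r, Fin (s i)), p.1 ≠ q.1 →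
      H.Adj (f p) (f q) ∨ (f p = x ∧ f q = y) ∨ (f p = y ∧ f q = x) := by
    intro p q hpq
    have h := f.map_rel (mp_adj.mpr hpq)
    rcases h with h | h
    · exact Or.inl h
    · rw [fromEdgeSet_adj] at h
      have h1 := h.1
      simp only [Set.mem_singleton_iff, Sym2.eq_iff] at h1
      rcases h1 with ⟨h1, h2⟩ | ⟨h1, h2⟩
      · exact Or.inr (Or.inl ⟨h1, h2⟩)
      · exact Or.inr (Or.inr ⟨h1, h2⟩)
  by_cases hhit : ∃ p q : (Σ i : Fin r, Fin (s i)), p.1 ≠ q.1 ∧ f p = x ∧ f q = y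
  · obtain ⟨p, q, h1, h2, h3⟩ := hhit
    exact ⟨⟨f, finj, p.1, q.1, p.2, q.2, h2, h3, h1, hxy, hadj⟩⟩
  · exfalso
    apply hsat.1
    refine ⟨⟨f, ?_⟩, finj⟩
    intro p q hpq
    rw [mp_adj] at hpq
    rcases hadj p q hpq with h | ⟨h1, h2⟩ | ⟨h1, h2⟩
    · exact h
    · exact absurd ⟨p, q, hpq, h1, h2⟩ hhit
    · exact absurd ⟨q, p, Ne.symm hpq, h2, h1⟩ hhit


namespace PCopy

variable {H : SimpleGraph V} {x y : V}

/-- The `i`-th part of the copy. -/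
def part (e : PCopy H s x y) (i : Fin r) : Finset V :=
  univ.image (fun q : Fin (s i) => e.f ⟨i, q⟩)

/-- All vertices of the copy. -/
def A (e : PCopy H s x y) : Finset V := univ.image e.f

/-- The copy minus the part of `y` minus `x`. -/
def W (e : PCopy H s x y) : Finset V := (e.A \ e.part e.iy).erase x

/-- The part of `x`, minus `x`. -/
def D (e : PCopy H s x y) : Finset V := (e.part e.ix).erase x

/-- The part of `y`, minus `y`. -/
def P (e : PCopy H s x y) : Finset V := (e.part e.iy).erase y

lemma fiber_mem_part (e : PCopy H s x y) (i : Fin r) (q : Fin (s i)) :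
    e.f ⟨i, q⟩ ∈ e.part i := mem_image.2 ⟨q, mem_univ q, rfl⟩

lemma mem_A (e : PCopy H s x y) (p : Σ i : Fin r, Fin (s i)) : e.f p ∈ e.A :=
  mem_image.2 ⟨p, mem_univ p, rfl⟩

lemma fst_eq_of_mem_part (e : PCopy H s x y) {p : Σ i : Fin r, Fin (s i)} {i : Fin r}
    (h : e.f p ∈ e.part i) : p.1 = i := by
  obtain ⟨q, _, hq⟩ := mem_image.1 h
  have := e.inj hq.symm
  rw [this]

lemma ne_x_of_fst_ne (e : PCopy H s x y) {p : Σ i : Fin r, Fin (s i)} (h : p.1 ≠ e.ix) :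
    e.f p ≠ x := by
  intro hh
  have h2 : e.f p = e.f ⟨e.ix, e.px⟩ := by rw [hh, e.hfx]
  exact h (congrArg Sigma.fst (e.inj h2))

lemma ne_y_of_fst_ne (e : PCopy H s x y) {p : Σ i : Fin r, Fin (s i)} (h : p.1 ≠ e.iy) :
    e.f p ≠ y := by
  intro hh
  have h2 : e.f p = e.f ⟨e.iy, e.py⟩ := by rw [hh, e.hfy]
  exact h (congrArg Sigma.fst (e.inj h2))

lemma x_mem_part (e : PCopy H s x y) : x ∈ e.part e.ix := by
  have h := e.fiber_mem_part e.ix e.px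
  rwa [e.hfx] at h

lemma y_mem_part (e : PCopy H s x y) : y ∈ e.part e.iy := by
  have h := e.fiber_mem_part e.iy e.py
  rwa [e.hfy] at h

lemma x_not_mem_part_iy (e : PCopy H s x y) : x ∉ e.part e.iy := by
  intro h
  have h2 : e.f ⟨e.ix, e.px⟩ ∈ e.part e.iy := by rwa [e.hfx]
  exact e.hixy (e.fst_eq_of_mem_part h2)

lemma y_not_mem_part_ix (e : PCopy H s x y) : y ∉ e.part e.ix := by
  intro h
  have h2 : e.f ⟨e.iy, e.py⟩ ∈ e.part e.ix := by rwa [e.hfy]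
  exact e.hixy.symm (e.fst_eq_of_mem_part h2)

lemma card_part (e : PCopy H s x y) (i : Fin r) : (e.part i).card = s i := by
  have hinj : Function.Injective (fun q : Fin (s i) => e.f ⟨i, q⟩) := by
    intro q q' h
    have h2 := e.inj h
    simpa using h2
  rw [part, card_image_of_injective _ hinj, card_univ, Fintype.card_fin]

lemma card_A (e : PCopy H s x y) : e.A.card = ∑ i, s i := by
  rw [A, card_image_of_injective _ e.inj, card_univ, Fintype.card_sigma]
  simp

lemma part_subset_A (e : PCopy H s x y) (i : Fin r) : e.part i ⊆ e.A := by
  intro v hv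
  obtain ⟨q, _, hq⟩ := mem_image.1 hv
  exact hq ▸ e.mem_A ⟨i, q⟩

lemma adj_of_ne_x (e : PCopy H s x y) {p q : Σ i : Fin r, Fin (s i)} (hpq : p.1 ≠ q.1)
    (hp : e.f p ≠ x) (hq : e.f q ≠ x) : H.Adj (e.f p) (e.f q) := by
  rcases e.adj p q hpq with h | ⟨h1, _⟩ | ⟨_, h2⟩
  · exact h
  · exact absurd h1 hp
  · exact absurd h2 hq

lemma adj_of_ne_y (e : PCopy H s x y) {p q : Σ i : Fin r, Fin (s i)} (hpq : p.1 ≠ q.1)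
    (hp : e.f p ≠ y) (hq : e.f q ≠ y) : H.Adj (e.f p) (e.f q) := by
  rcases e.adj p q hpq with h | ⟨_, h2⟩ | ⟨h1, _⟩
  · exact h
  · exact absurd h2 hq
  · exact absurd h1 hp

lemma mem_W_iff (e : PCopy H s x y) {v : V} :
    v ∈ e.W ↔ v ∈ e.A ∧ v ∉ e.part e.iy ∧ v ≠ x := by
  simp only [W, mem_erase, mem_sdiff]
  tauto

lemma fiber_mem_W (e : PCopy H s x y) {p : Σ i : Fin r, Fin (s i)} (h1 : p.1 ≠ e.iy)
    (h2 : e.f p ≠ x) : e.f p ∈ e.W := by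
  rw [e.mem_W_iff]
  exact ⟨e.mem_A p, fun hmem => h1 (e.fst_eq_of_mem_part hmem), h2⟩

lemma exists_of_mem_W (e : PCopy H s x y) {v : V} (hv : v ∈ e.W) :
    ∃ p : Σ i : Fin r, Fin (s i), p.1 ≠ e.iy ∧ e.f p = v ∧ v ≠ x := by
  rw [e.mem_W_iff] at hv
  obtain ⟨hA, hniy, hnx⟩ := hv
  obtain ⟨p, _, hp⟩ := mem_image.1 hA
  refine ⟨p, ?_, hp, hnx⟩
  intro h
  apply hniy
  rw [← hp]
  obtain ⟨p1, p2⟩ := p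
  have h' : p1 = e.iy := h
  subst h'
  exact e.fiber_mem_part _ _

lemma y_not_mem_W (e : PCopy H s x y) : y ∉ e.W := by
  rw [e.mem_W_iff]
  intro ⟨_, h, _⟩
  exact h e.y_mem_part

lemma x_not_mem_W (e : PCopy H s x y) : x ∉ e.W := by
  rw [e.mem_W_iff]
  intro ⟨_, _, h⟩
  exact h rfl

lemma W_subset_nb_y [DecidableRel H.Adj] (e : PCopy H s x y) : e.W ⊆ nb H y := by
  intro v hv
  obtain ⟨p, hp1, hp2, hp3⟩ := e.exists_of_mem_W hv
  have hadj : H.Adj (e.f p) (e.f ⟨e.iy, e.py⟩) :=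
    e.adj_of_ne_x hp1 (by rw [hp2]; exact hp3) (by rw [e.hfy]; exact e.hne.symm)
  rw [e.hfy] at hadj
  rw [mem_nb, ← hp2]
  exact hadj.symm

lemma card_W (e : PCopy H s x y) : e.W.card + 1 + s e.iy = ∑ i, s i := by
  have hxA : x ∈ e.A := by
    have h := e.mem_A ⟨e.ix, e.px⟩
    rwa [e.hfx] at h
  have h1 : x ∈ e.A \ e.part e.iy := mem_sdiff.2 ⟨hxA, e.x_not_mem_part_iy⟩
  have h2 := card_erase_add_one h1
  have h3 := card_sdiff_add_card_eq_card (e.part_subset_A e.iy)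
  rw [← e.card_A, ← h3, ← h2, e.card_part, W]

lemma D_subset_W (e : PCopy H s x y) : e.D ⊆ e.W := by
  intro v hv
  rw [D, mem_erase] at hv
  rw [e.mem_W_iff]
  refine ⟨e.part_subset_A e.ix hv.2, fun hmem => ?_, hv.1⟩
  obtain ⟨q, _, hq⟩ := mem_image.1 hv.2
  rw [← hq] at hmem
  exact e.hixy (e.fst_eq_of_mem_part hmem)

lemma card_D (e : PCopy H s x y) : e.D.card + 1 = s e.ix := by
  rw [D, card_erase_add_one e.x_mem_part, e.card_part]

lemma fiber_mem_X (e : PCopy H s x y) {p : Σ i : Fin r, Fin (s i)} (h1 : p.1 ≠ e.ix)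
    (h2 : p.1 ≠ e.iy) : e.f p ∈ e.W \ e.D := by
  refine mem_sdiff.2 ⟨e.fiber_mem_W h2 (e.ne_x_of_fst_ne h1), fun hD => ?_⟩
  rw [D, mem_erase] at hD
  exact h1 (e.fst_eq_of_mem_part hD.2)

lemma exists_of_mem_X (e : PCopy H s x y) {v : V} (hv : v ∈ e.W \ e.D) :
    ∃ p : Σ i : Fin r, Fin (s i), p.1 ≠ e.ix ∧ p.1 ≠ e.iy ∧ e.f p = v := by
  obtain ⟨hW, hD⟩ := mem_sdiff.1 hv
  obtain ⟨p, hp1, hp2, hp3⟩ := e.exists_of_mem_W hW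
  refine ⟨p, ?_, hp1, hp2⟩
  intro h
  apply hD
  rw [D, mem_erase, ← hp2]
  constructor
  · rw [hp2]; exact hp3
  · obtain ⟨p1, p2⟩ := p
    have h' : p1 = e.ix := h
    subst h'
    exact e.fiber_mem_part _ _

lemma X_subset_nb_x [DecidableRel H.Adj] (e : PCopy H s x y) : e.W \ e.D ⊆ nb H x := by
  intro v hv
  obtain ⟨p, hp1, hp2, hp3⟩ := e.exists_of_mem_X hv
  have hadj : H.Adj (e.f ⟨e.ix, e.px⟩) (e.f p) :=
    e.adj_of_ne_y (p := ⟨e.ix, e.px⟩) (fun h => hp1 h.symm) (by rw [e.hfx]; exact e.hne)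
      (e.ne_y_of_fst_ne hp2)
  rw [e.hfx] at hadj
  rw [mem_nb, ← hp3]
  exact hadj

lemma D_adj_X (e : PCopy H s x y) : ∀ u ∈ e.D, ∀ v ∈ e.W \ e.D, H.Adj u v := by
  intro u hu v hv
  obtain ⟨p, hp1, hp2, hp3⟩ := e.exists_of_mem_X hv
  rw [D, mem_erase] at hu
  obtain ⟨q, _, hq⟩ := mem_image.1 hu.2
  have hadj : H.Adj (e.f ⟨e.ix, q⟩) (e.f p) :=
    e.adj_of_ne_x (p := ⟨e.ix, q⟩) (fun h => hp1 h.symm) (by rw [hq]; exact hu.1)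
      (e.ne_x_of_fst_ne hp1)
  rw [hq, hp3] at hadj
  exact hadj

lemma P_subset_nb_x [DecidableRel H.Adj] (e : PCopy H s x y) : e.P ⊆ nb H x := by
  intro v hv
  rw [P, mem_erase] at hv
  obtain ⟨q, _, hq⟩ := mem_image.1 hv.2
  have hadj : H.Adj (e.f ⟨e.ix, e.px⟩) (e.f ⟨e.iy, q⟩) :=
    e.adj_of_ne_y e.hixy (by rw [e.hfx]; exact e.hne) (by rw [hq]; exact hv.1)
  rw [e.hfx, hq] at hadj
  exact mem_nb.2 hadj

lemma card_P (e : PCopy H s x y) : e.P.card + 1 = s e.iy := by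
  rw [P, card_erase_add_one e.y_mem_part, e.card_part]

lemma part_subset_X (e : PCopy H s x y) {j : Fin r} (h1 : j ≠ e.ix) (h2 : j ≠ e.iy) :
    e.part j ⊆ e.W \ e.D := by
  intro v hv
  obtain ⟨q, _, hq⟩ := mem_image.1 hv
  exact hq ▸ e.fiber_mem_X (p := ⟨j, q⟩) h1 h2

lemma part_disj (e : PCopy H s x y) {j j' : Fin r} (h : j ≠ j') :
    ∀ v ∈ e.part j, v ∉ e.part j' := by
  intro v hv hv'
  obtain ⟨q, _, hq⟩ := mem_image.1 hv
  rw [← hq] at hv'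
  exact h (e.fst_eq_of_mem_part (p := ⟨j, q⟩) hv')

lemma P_adj_W (e : PCopy H s x y) : ∀ u ∈ e.P, ∀ v ∈ e.W, H.Adj u v := by
  intro u hu v hv
  rw [P, mem_erase] at hu
  obtain ⟨q, _, hq⟩ := mem_image.1 hu.2
  obtain ⟨p, hp1, hp2, hp3⟩ := e.exists_of_mem_W hv
  have hadj : H.Adj (e.f ⟨e.iy, q⟩) (e.f p) :=
    e.adj_of_ne_x (p := ⟨e.iy, q⟩) (fun h => hp1 h.symm)
      (e.ne_x_of_fst_ne (fun h => e.hixy (h.symm : e.ix = e.iy)))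
      (by rw [hp2]; exact hp3)
  rw [hq, hp2] at hadj
  exact hadj

end PCopy

/-- Data of one level of the iterated construction. -/
structure Lv (G : SimpleGraph V) [DecidableRel G.Adj] (s : Fin r → ℕ) : Type where
  y : V
  Bs : Finset V
  Wl : Finset V
  Dl : Finset V
  Tl : Finset V
  cop : (z : V) → z ∈ Bs → PCopy G s z y
  hyBs : y ∉ Bs
  hcW : ∀ z hz, (cop z hz).W = Wl
  hcD : ∀ z hz, (cop z hz).D = Dl
  hT : ∀ z ∈ Bs, nb G z ∩ Wl = Tl
  hMne : Tl ≠ Wl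

variable {H : SimpleGraph V}

/-- There are `c` vertices of `B` with at least `τ` common neighbors. -/
def Good (H : SimpleGraph V) (B : Finset V) (c : ℕ) (τ : ℤ) : Prop :=
  ∃ C ⊆ B, C.card = c ∧ τ ≤ ((commonNbrs H ↑C).ncard : ℤ)

lemma good_of_finset {B C : Finset V} {c : ℕ} {τ : ℤ} (D : Finset V)
    (hCB : C ⊆ B) (hCc : C.card = c) (hD : ∀ v ∈ D, ∀ u ∈ C, H.Adj u v)
    (hτ : τ ≤ (D.card : ℤ)) : Good H B c τ := by
  refine ⟨C, hCB, hCc, le_trans hτ ?_⟩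
  have hsub : (↑D : Set V) ⊆ commonNbrs H ↑C := by
    intro v hv u hu
    exact hD v hv u hu
  have h2 := Set.ncard_le_ncard hsub (Set.toFinite _)
  rw [Set.ncard_coe_finset] at h2
  exact_mod_cast h2

lemma level_step [DecidableRel H.Adj] (hsat : IsSat (MP s) H) {a : ℕ}
    {B : Finset V} (hBind : ∀ u ∈ B, ∀ v ∈ B, ¬ H.Adj u v)
    (hBdeg : ∀ v ∈ B, (nb H v).card ≤ a)
    {c : ℕ} {τ : ℤ} (hc : 1 ≤ c)
    (hτ : ∀ i : Fin r, τ ≤ (∑ j, (s j : ℤ)) - (s i : ℤ) - 1)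
    (B' : Finset V) (hB'B : B' ⊆ B) (n : ℕ) (hn : c ≤ n)
    (hcard : 8 ^ a * n + 1 ≤ B'.card) :
    Good H B c τ ∨ ∃ L : Lv H s, L.y ∈ B' ∧ L.Bs ⊆ B' ∧ n ≤ L.Bs.card := by
  have hB'ne : B'.Nonempty := by
    rw [← card_pos]
    omega
  obtain ⟨y, hy⟩ := hB'ne
  have hyB : y ∈ B := hB'B hy
  have hcop : ∀ z ∈ B'.erase y, Nonempty (PCopy H s z y) := by
    intro z hz
    have hzB : z ∈ B := hB'B (erase_subset _ _ hz)
    exact exists_pcopy hsat (ne_of_mem_erase hz) (hBind z hzB y hyB)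
  let φ : V → Finset V × Finset V × Finset V := fun z =>
    if hz : z ∈ B'.erase y then
      ((hcop z hz).some.W, (hcop z hz).some.D, nb H z ∩ (hcop z hz).some.W)
    else (∅, ∅, ∅)
  have hφ : ∀ z (hz : z ∈ B'.erase y),
      φ z = ((hcop z hz).some.W, (hcop z hz).some.D, nb H z ∩ (hcop z hz).some.W) :=
    fun z hz => dif_pos hz
  have hmaps : ∀ z ∈ B'.erase y,
      φ z ∈ (nb H y).powerset ×ˢ (nb H y).powerset ×ˢ (nb H y).powerset := by
    intro z hz
    rw [hφ z hz, mem_product, mem_product]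
    refine ⟨mem_powerset.2 ((hcop z hz).some.W_subset_nb_y), mem_powerset.2 ?_, mem_powerset.2 ?_⟩
    · exact subset_trans ((hcop z hz).some.D_subset_W) ((hcop z hz).some.W_subset_nb_y)
    · exact subset_trans inter_subset_right ((hcop z hz).some.W_subset_nb_y)
  have hpows : ((nb H y).powerset ×ˢ (nb H y).powerset ×ˢ (nb H y).powerset).card * n
      ≤ (B'.erase y).card := by
    have hp : (nb H y).powerset.card ≤ 2 ^ a := by
      rw [card_powerset]
      exact Nat.pow_le_pow_right (by norm_num) (hBdeg y hyB)
    have h1 : ((nb H y).powerset ×ˢ (nb H y).powerset ×ˢ (nb H y).powerset).card ≤ 8 ^ a := by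
      rw [card_product, card_product]
      calc (nb H y).powerset.card * ((nb H y).powerset.card * (nb H y).powerset.card)
          ≤ 2 ^ a * (2 ^ a * 2 ^ a) := by
            exact Nat.mul_le_mul hp (Nat.mul_le_mul hp hp)
        _ = 8 ^ a := by
            rw [← Nat.mul_pow, ← Nat.mul_pow]
    have h2 : (B'.erase y).card = B'.card - 1 := card_erase_of_mem hy
    have := Nat.mul_le_mul_right n h1
    omega
  obtain ⟨trip, _, hfib⟩ := exists_le_card_fiber_of_mul_le_card_of_maps_to hmaps
    ⟨(∅, ∅, ∅), by simp⟩ hpows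
  obtain ⟨W0, D0, T0⟩ := trip
  set Bs := {z ∈ B'.erase y | φ z = (W0, D0, T0)} with hBsdef
  have hBssub : Bs ⊆ B'.erase y := filter_subset _ _
  have hmem : ∀ z (hz : z ∈ Bs), (hcop z (hBssub hz)).some.W = W0 ∧
      (hcop z (hBssub hz)).some.D = D0 ∧ nb H z ∩ W0 = T0 := by
    intro z hz
    have h1 : φ z = (W0, D0, T0) := (mem_filter.1 hz).2
    rw [hφ z (hBssub hz), Prod.mk.injEq, Prod.mk.injEq] at h1
    obtain ⟨e1, e2, e3⟩ := h1
    exact ⟨e1, e2, by rw [← e1]; exact e3⟩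
  have hBscard : n ≤ Bs.card := hfib
  have hBsne : Bs.Nonempty := by
    rw [← card_pos]
    omega
  obtain ⟨z₁, hz₁⟩ := hBsne
  have hWτ : τ ≤ (W0.card : ℤ) := by
    have hw := (hcop z₁ (hBssub hz₁)).some.card_W
    rw [(hmem z₁ hz₁).1] at hw
    have hτ' := hτ (hcop z₁ (hBssub hz₁)).some.iy
    have hcast : ((∑ i, s i : ℕ) : ℤ) = ∑ i, (s i : ℤ) := by push_cast; rfl
    have hw' : (W0.card : ℤ) + 1 + (s (hcop z₁ (hBssub hz₁)).some.iy : ℤ)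
        = ((∑ i, s i : ℕ) : ℤ) := by exact_mod_cast congrArg (Nat.cast : ℕ → ℤ) hw
    rw [hcast] at hw'
    linarith
  by_cases hTW : T0 = W0
  · -- Done: all of Bs is adjacent to all of W0
    left
    obtain ⟨C, hCsub, hCcard⟩ := exists_subset_card_eq (s := Bs) (n := c) (le_trans hn hBscard)
    refine good_of_finset W0 (fun v hv => hB'B (erase_subset _ _ (hBssub (hCsub hv))))
      hCcard ?_ hWτ
    intro v hv u hu
    have h3 := (hmem u (hCsub hu)).2.2
    rw [hTW] at h3
    rw [inter_eq_right] at h3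
    exact mem_nb.1 (h3 hv)
  · -- new level
    right
    refine ⟨⟨y, Bs, W0, D0, T0, fun z hz => (hcop z (hBssub hz)).some, notMem_erase y B' ∘
      (fun h => hBssub h), fun z hz => (hmem z hz).1, fun z hz => (hmem z hz).2.1,
      fun z hz => (hmem z hz).2.2, hTW⟩, hy, subset_trans hBssub (erase_subset _ _), hBscard⟩

/-- Cardinality threshold for building `K` levels. -/
def Rf (a c : ℕ) : ℕ → ℕ
  | 0 => 64 ^ a * c
  | K + 1 => 8 ^ a * Rf a c K + 1

lemma le_Rf (a c : ℕ) : ∀ K, c ≤ Rf a c K := by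
  intro K
  induction K with
  | zero =>
    show c ≤ 64 ^ a * c
    have h : 1 ≤ 64 ^ a := Nat.one_le_pow _ _ (by norm_num)
    calc c = 1 * c := (one_mul c).symm
      _ ≤ 64 ^ a * c := Nat.mul_le_mul_right c h
  | succ K ih =>
    show c ≤ 8 ^ a * Rf a c K + 1
    have h : 1 ≤ 8 ^ a := Nat.one_le_pow _ _ (by norm_num)
    have h2 : Rf a c K ≤ 8 ^ a * Rf a c K := by
      calc Rf a c K = 1 * Rf a c K := (one_mul _).symm
        _ ≤ 8 ^ a * Rf a c K := Nat.mul_le_mul_right _ h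
    omega

lemma build_chain [DecidableRel H.Adj] (hsat : IsSat (MP s) H) {a : ℕ}
    {B : Finset V} (hBind : ∀ u ∈ B, ∀ v ∈ B, ¬ H.Adj u v)
    (hBdeg : ∀ v ∈ B, (nb H v).card ≤ a)
    {c : ℕ} {τ : ℤ} (hc : 1 ≤ c)
    (hτ : ∀ i : Fin r, τ ≤ (∑ j, (s j : ℤ)) - (s i : ℤ) - 1)
    (K : ℕ) : ∀ (B' : Finset V), B' ⊆ B → Rf a c K ≤ B'.card →
    Good H B c τ ∨ ∃ (L : (k : ℕ) → k < K → Lv H s) (S : Finset V),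
      S ⊆ B' ∧ 64 ^ a * c ≤ S.card ∧
      (∀ k (hk : k < K), (L k hk).Bs ⊆ B') ∧ (∀ k (hk : k < K), (L k hk).y ∈ B') ∧
      (∀ k (hk : k < K), S ⊆ (L k hk).Bs) ∧
      (∀ k k' (hkk' : k < k') (hk' : k' < K), (L k' hk').y ∈ (L k (lt_trans hkk' hk')).Bs) := by
  induction K with
  | zero =>
    intro B' hB'B hcard
    right
    exact ⟨fun k hk => absurd hk (by omega), B', subset_rfl, hcard,
      fun k hk => absurd hk (by omega), fun k hk => absurd hk (by omega),
      fun k hk => absurd hk (by omega), fun k k' h hk' => absurd hk' (by omega)⟩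
  | succ K ih =>
    intro B' hB'B hcard
    have hn : c ≤ Rf a c K := le_Rf a c K
    have hcard' : 8 ^ a * Rf a c K + 1 ≤ B'.card := hcard
    rcases level_step hsat hBind hBdeg hc hτ B' hB'B (Rf a c K) hn hcard' with
      hG | ⟨L0, hL0y, hL0sub, hL0card⟩
    · exact Or.inl hG
    rcases ih L0.Bs (subset_trans hL0sub hB'B) hL0card with
      hG | ⟨L, S, hSsub, hScard, hLB, hLy, hLS, hyy⟩
    · exact Or.inl hG
    right
    refine ⟨fun k hk => if h : k = 0 then L0 else L (k - 1) (by omega), S,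
      subset_trans hSsub hL0sub, hScard, ?_, ?_, ?_, ?_⟩
    · intro k hk
      by_cases h : k = 0
      · subst h
        simp only [dif_pos]
        exact hL0sub
      · simp only [dif_neg h]
        exact subset_trans (hLB (k - 1) (by omega)) hL0sub
    · intro k hk
      by_cases h : k = 0
      · subst h
        simp only [dif_pos]
        exact hL0y
      · simp only [dif_neg h]
        exact hL0sub (hLy (k - 1) (by omega))
    · intro k hk
      by_cases h : k = 0
      · subst h
        simp only [dif_pos]
        exact hSsub
      · simp only [dif_neg h]
        exact hLS (k - 1) (by omega)
    · intro k k' hkk' hk'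
      have h' : ¬ (k' = 0) := by omega
      by_cases h : k = 0
      · subst h
        simp only [dif_pos, dif_neg h']
        exact hLy (k' - 1) (by omega)
      · simp only [dif_neg h, dif_neg h']
        have := hyy (k - 1) (k' - 1) (by omega) (by omega)
        convert this using 2

/-- To exhibit a copy of the complete multipartite graph it suffices to give disjoint
parts of the right sizes with all cross-adjacencies. -/
lemma hasCopy_of_parts {H : SimpleGraph V} (Y : Fin r → Finset V)
    (hcard : ∀ i, (Y i).card = s i)
    (hdisj : ∀ i j, i ≠ j → ∀ v ∈ Y i, v ∉ Y j)
    (hadj : ∀ i j, i ≠ j → ∀ v ∈ Y i, ∀ w ∈ Y j, H.Adj v w) :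
    HasCopy (MP s) H := by
  refine ⟨⟨fun p => ((Y p.1).equivFin.symm (Fin.cast (hcard p.1).symm p.2) : V), ?_⟩, ?_⟩
  · intro p q hpq
    rw [mp_adj] at hpq
    exact hadj p.1 q.1 hpq _ (coe_mem _) _ (coe_mem _)
  · intro p q hpq
    by_cases h : p.1 = q.1
    · obtain ⟨pi, p2⟩ := p
      obtain ⟨qi, q2⟩ := q
      have h' : pi = qi := h
      subst h'
      have h2 := (Y pi).equivFin.symm.injective (Subtype.ext hpq)
      have h3 : p2 = q2 := by
        have h4 := congrArg Fin.val h2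
        simp only [Fin.coe_cast] at h4
        exact Fin.ext h4
      rw [h3]
    · exfalso
      refine hdisj p.1 q.1 h ((Y p.1).equivFin.symm (Fin.cast (hcard p.1).symm p.2) : V)
        (coe_mem _) ?_
      have hpq' : (((Y p.1).equivFin.symm (Fin.cast (hcard p.1).symm p.2) : V))
          = (((Y q.1).equivFin.symm (Fin.cast (hcard q.1).symm q.2) : V)) := hpq
      rw [hpq']
      exact coe_mem _

/-- The key rigidity argument: if levels `k` and `k'` have the same "outer" set
`X = W \ D`, then the vertices adjacent to all of `Wl k ∪ Wl k'` cannot fill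
a whole part of size `s iy`. -/
lemma rigid {H : SimpleGraph V} [DecidableRel H.Adj] (hsat : IsSat (MP s) H)
    (Lk Lk' : Lv H s) (hX : Lk.Wl \ Lk.Dl = Lk'.Wl \ Lk'.Dl)
    {z₀ : V} (hz : z₀ ∈ Lk.Bs) (hz' : z₀ ∈ Lk'.Bs)
    (hyk' : Lk'.y ∈ Lk.Bs)
    (R : Finset V) (hRadj : ∀ v ∈ R, ∀ w ∈ Lk.Wl ∪ Lk'.Wl, H.Adj w v)
    (hRcard : R.card = s ((Lk.cop z₀ hz).iy)) : False := by
  set e := Lk.cop z₀ hz with hedef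
  set e' := Lk'.cop z₀ hz' with he'def
  have hWk : e.W = Lk.Wl := Lk.hcW z₀ hz
  have hDk : e.D = Lk.Dl := Lk.hcD z₀ hz
  have hW' : e'.W = Lk'.Wl := Lk'.hcW z₀ hz'
  have hD' : e'.D = Lk'.Dl := Lk'.hcD z₀ hz'
  -- extract the "missing" vertex u'
  have hT'W : Lk'.Tl ⊆ Lk'.Wl := by
    rw [← Lk'.hT z₀ hz']
    exact inter_subset_right
  obtain ⟨u', hu'W, hu'T⟩ := exists_of_ssubset (Finset.ssubset_iff_subset_ne.2 ⟨hT'W, Lk'.hMne⟩)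
  have hu'z : u' ∉ nb H z₀ := by
    intro h
    exact hu'T (by rw [← Lk'.hT z₀ hz']; exact mem_inter.2 ⟨h, hu'W⟩)
  have hu'D : u' ∈ Lk'.Dl := by
    by_contra h
    apply hu'z
    have hx := e'.X_subset_nb_x
    rw [hW', hD'] at hx
    exact hx (mem_sdiff.2 ⟨hu'W, h⟩)
  have hu'Wk : u' ∉ Lk.Wl := by
    intro h
    by_cases hT : u' ∈ Lk.Tl
    · apply hu'z
      have h2 := Lk.hT z₀ hz
      rw [← h2] at hT
      exact (mem_inter.1 hT).1
    · have h1 : u' ∉ nb H Lk'.y := by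
        intro hh
        exact hT (by rw [← Lk.hT Lk'.y hyk']; exact mem_inter.2 ⟨hh, h⟩)
      apply h1
      have hw := e'.W_subset_nb_y
      rw [hW'] at hw
      exact hw hu'W
  -- basic sets
  have hDlW : Lk.Dl ⊆ Lk.Wl := by
    rw [← hWk, ← hDk]
    exact e.D_subset_W
  have hu'Dk : u' ∉ Lk.Dl := fun h => hu'Wk (hDlW h)
  have hDU : (insert u' Lk.Dl).card = s e.ix := by
    rw [card_insert_of_notMem hu'Dk]
    have h2 := e.card_D
    rw [hDk] at h2
    omega
  have hRWk : ∀ v ∈ R, v ∉ Lk.Wl :=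
    fun v hv h => H.loopless.irrefl v (hRadj v hv v (mem_union_left _ h))
  have hRW' : ∀ v ∈ R, v ∉ Lk'.Wl :=
    fun v hv h => H.loopless.irrefl v (hRadj v hv v (mem_union_right _ h))
  have hXeq : e.W \ e.D = Lk.Wl \ Lk.Dl := by rw [hWk, hDk]
  have hXeq' : e.W \ e.D = e'.W \ e'.D := by rw [hXeq, hX, hW', hD']
  have hXsub : ∀ j, j ≠ e.ix → j ≠ e.iy → e.part j ⊆ e.W \ e.D :=
    fun j h1 h2 => e.part_subset_X h1 h2
  have hDUX : ∀ v ∈ insert u' Lk.Dl, v ∉ e.W \ e.D := by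
    intro v hv hmem
    rw [hXeq] at hmem
    rcases mem_insert.1 hv with h | h
    · rw [h] at hmem
      exact hu'Wk (mem_sdiff.1 hmem).1
    · exact (mem_sdiff.1 hmem).2 h
  have hRX : ∀ v ∈ R, v ∉ e.W \ e.D := by
    intro v hv hmem
    rw [hXeq] at hmem
    exact hRWk v hv (mem_sdiff.1 hmem).1
  have hDUR : ∀ v ∈ insert u' Lk.Dl, v ∉ R := by
    intro v hv hvR
    rcases mem_insert.1 hv with h | h
    · rw [h] at hvR
      exact hRW' u' hvR hu'W
    · exact hRWk v hvR (hDlW h)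
  have hDUu : ∀ v ∈ insert u' Lk.Dl, v ∈ Lk.Wl ∪ Lk'.Wl := by
    intro v hv
    rcases mem_insert.1 hv with h | h
    · rw [h]
      exact mem_union_right _ hu'W
    · exact mem_union_left _ (hDlW h)
  -- adjacency of u' to the outer parts
  have hu'X : ∀ w ∈ e.W \ e.D, H.Adj u' w := by
    intro w hw
    rw [hXeq'] at hw
    refine e'.D_adj_X u' ?_ w hw
    rw [hD']
    exact hu'D
  -- build the forbidden copy
  apply hsat.1
  refine hasCopy_of_parts
    (fun i => if i = e.ix then insert u' Lk.Dl else if i = e.iy then R else e.part i)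
    ?_ ?_ ?_
  · intro i
    by_cases h1 : i = e.ix
    · subst h1
      rw [if_pos rfl]
      exact hDU
    · by_cases h2 : i = e.iy
      · subst h2
        rw [if_neg h1, if_pos rfl]
        exact hRcard
      · rw [if_neg h1, if_neg h2]
        exact e.card_part i
  · -- disjointness
    intro i j hij v hvi hvj
    by_cases h1 : i = e.ix
    · subst h1
      rw [if_pos rfl] at hvi
      by_cases h2 : j = e.iy
      · subst h2
        rw [if_neg (Ne.symm hij), if_pos rfl] at hvj
        exact hDUR v hvi hvj
      · rw [if_neg (Ne.symm hij), if_neg h2] at hvj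
        exact hDUX v hvi (hXsub j (Ne.symm hij) h2 hvj)
    · by_cases h2 : i = e.iy
      · subst h2
        rw [if_neg h1, if_pos rfl] at hvi
        by_cases h3 : j = e.ix
        · subst h3
          rw [if_pos rfl] at hvj
          exact hDUR v hvj hvi
        · rw [if_neg h3, if_neg (Ne.symm hij)] at hvj
          exact hRX v hvi (hXsub j h3 (Ne.symm hij) hvj)
      · rw [if_neg h1, if_neg h2] at hvi
        by_cases h3 : j = e.ix
        · subst h3
          rw [if_pos rfl] at hvj
          exact hDUX v hvj (hXsub i h1 h2 hvi)
        · by_cases h4 : j = e.iy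
          · subst h4
            rw [if_neg h3, if_pos rfl] at hvj
            exact hRX v hvj (hXsub i h1 h2 hvi)
          · rw [if_neg h3, if_neg h4] at hvj
            exact e.part_disj hij v hvi hvj
  · -- adjacency
    intro i j hij v hvi w hvj
    by_cases h1 : i = e.ix
    · subst h1
      rw [if_pos rfl] at hvi
      by_cases h2 : j = e.iy
      · subst h2
        rw [if_neg (Ne.symm hij), if_pos rfl] at hvj
        exact hRadj w hvj v (hDUu v hvi)
      · rw [if_neg (Ne.symm hij), if_neg h2] at hvj
        have hwX := hXsub j (Ne.symm hij) h2 hvj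
        rcases mem_insert.1 hvi with h | h
        · rw [h]
          exact hu'X w hwX
        · refine e.D_adj_X v ?_ w hwX
          rw [hDk]
          exact h
    · by_cases h2 : i = e.iy
      · subst h2
        rw [if_neg h1, if_pos rfl] at hvi
        by_cases h3 : j = e.ix
        · subst h3
          rw [if_pos rfl] at hvj
          exact (hRadj v hvi w (hDUu w hvj)).symm
        · rw [if_neg h3, if_neg (Ne.symm hij)] at hvj
          have hwX := hXsub j h3 (Ne.symm hij) hvj
          refine (hRadj v hvi w ?_).symm
          rw [← hWk]
          exact mem_union_left _ (mem_sdiff.1 hwX).1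
      · rw [if_neg h1, if_neg h2] at hvi
        by_cases h3 : j = e.ix
        · subst h3
          rw [if_pos rfl] at hvj
          have hwX := hXsub i h1 h2 hvi
          rcases mem_insert.1 hvj with h | h
          · rw [h]
            exact (hu'X v hwX).symm
          · refine (e.D_adj_X w ?_ v hwX).symm
            rw [hDk]
            exact h
        · by_cases h4 : j = e.iy
          · subst h4
            rw [if_neg h3, if_pos rfl] at hvj
            have hwX := hXsub i h1 h2 hvi
            refine hRadj w hvj v ?_
            rw [← hWk]
            exact mem_union_left _ (mem_sdiff.1 hwX).1
          · rw [if_neg h3, if_neg h4] at hvj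
            obtain ⟨q, _, hq⟩ := mem_image.1 hvi
            obtain ⟨q', _, hq'⟩ := mem_image.1 hvj
            have hadj := e.adj_of_ne_x (p := ⟨i, q⟩) (q := ⟨j, q'⟩) hij
              (e.ne_x_of_fst_ne h1) (e.ne_x_of_fst_ne h3)
            rw [hq, hq'] at hadj
            exact hadj

lemma endgame [DecidableRel H.Adj] (hsat : IsSat (MP s) H) {a : ℕ} (ha : 1 ≤ a)
    {B : Finset V} (hBdeg : ∀ v ∈ B, (nb H v).card ≤ a)
    {c : ℕ} {τ : ℤ} (hc : 1 ≤ c)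
    (hτ : ∀ i : Fin r, τ ≤ (∑ j, (s j : ℤ)) - (s i : ℤ) - 1)
    (K : ℕ) (hK : K = 4 ^ a + 2 ^ a)
    (L : (k : ℕ) → k < K → Lv H s) (S : Finset V) (hSB : S ⊆ B)
    (hScard : 64 ^ a * c ≤ S.card)
    (hLS : ∀ k (hk : k < K), S ⊆ (L k hk).Bs)
    (hyy : ∀ k k' (hkk' : k < k') (hk' : k' < K),
      (L k' hk').y ∈ (L k (lt_trans hkk' hk')).Bs) :
    Good H B c τ := by
  have hSpos : 0 < S.card := by
    have h1 : 0 < 64 ^ a * c := Nat.mul_pos (Nat.pow_pos (n := a) (by norm_num)) hc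
    omega
  obtain ⟨z₀, hz₀⟩ := card_pos.1 hSpos
  have hz₀B : z₀ ∈ B := hSB hz₀
  -- the common outer set of each level, as a function of the level
  set ξ : ℕ → Finset V := fun k =>
    if hk : k < K then (L k hk).Wl \ (L k hk).Dl else ∅ with hξdef
  have hξ : ∀ k (hk : k < K), ξ k = (L k hk).Wl \ (L k hk).Dl := fun k hk => dif_pos hk
  have hξnb : ∀ k ∈ range K, ξ k ∈ (nb H z₀).powerset := by
    intro k hk'
    have hk := mem_range.1 hk'
    rw [hξ k hk, mem_powerset]
    have hx := ((L k hk).cop z₀ (hLS k hk hz₀)).X_subset_nb_x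
    rwa [(L k hk).hcW z₀ (hLS k hk hz₀), (L k hk).hcD z₀ (hLS k hk hz₀)] at hx
  have hpowz : (nb H z₀).powerset.card ≤ 2 ^ a := by
    rw [card_powerset]
    exact Nat.pow_le_pow_right (by norm_num) (hBdeg z₀ hz₀B)
  have hmul : (nb H z₀).powerset.card * (2 ^ a + 1) ≤ (range K).card := by
    rw [card_range, hK]
    have h2 : 2 ^ a * 2 ^ a = 4 ^ a := by rw [← Nat.mul_pow]
    have h3 : 2 ^ a * (2 ^ a + 1) = 4 ^ a + 2 ^ a := by
      rw [Nat.mul_add, h2, mul_one]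
    have h4 := Nat.mul_le_mul_right (2 ^ a + 1) hpowz
    omega
  obtain ⟨X₀, _, hXfib⟩ := exists_le_card_fiber_of_mul_le_card_of_maps_to hξnb
    ⟨∅, by simp⟩ hmul
  set Lset := {k ∈ range K | ξ k = X₀} with hLsetdef
  have hLcard : 2 ^ a + 1 ≤ Lset.card := hXfib
  have hLsub : ∀ k ∈ Lset, k < K := fun k hk => mem_range.1 (mem_filter.1 hk).1
  have hLX : ∀ k (hk : k < K), k ∈ Lset → (L k hk).Wl \ (L k hk).Dl = X₀ := by
    intro k hk hmem
    rw [← hξ k hk]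
    exact (mem_filter.1 hmem).2
  -- the private part of each survivor at each level
  set Pk : ℕ → V → Finset V := fun k y =>
    if hk : k < K then
      (if hy : y ∈ (L k hk).Bs then ((L k hk).cop y hy).P else ∅) else ∅ with hPkdef
  have hPk : ∀ k (hk : k < K) y (hy : y ∈ (L k hk).Bs),
      Pk k y = ((L k hk).cop y hy).P := by
    intro k hk y hy
    show dite _ _ _ = _
    rw [dif_pos hk, dif_pos hy]
  -- each survivor has two levels in Lset with the same private part
  have hpair : ∀ y : V, ∃ kk : ℕ × ℕ, y ∈ S →
      kk.1 ∈ Lset ∧ kk.2 ∈ Lset ∧ kk.1 < kk.2 ∧ Pk kk.1 y = Pk kk.2 y := by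
    intro y
    by_cases hy : y ∈ S
    · have hyB : y ∈ B := hSB hy
      have hmapsy : ∀ k ∈ Lset, Pk k y ∈ (nb H y).powerset := by
        intro k hk
        have hk' := hLsub k hk
        rw [hPk k hk' y (hLS k hk' hy), mem_powerset]
        exact ((L k hk').cop y (hLS k hk' hy)).P_subset_nb_x
      have hcard : (nb H y).powerset.card < Lset.card := by
        have h1 : (nb H y).powerset.card ≤ 2 ^ a := by
          rw [card_powerset]
          exact Nat.pow_le_pow_right (by norm_num) (hBdeg y hyB)
        omega
      obtain ⟨k₁, hk₁, k₂, hk₂, hne, heq⟩ :=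
        exists_ne_map_eq_of_card_lt_of_maps_to hcard hmapsy
      rcases lt_or_gt_of_ne hne with h | h
      · exact ⟨(k₁, k₂), fun _ => ⟨hk₁, hk₂, h, heq⟩⟩
      · exact ⟨(k₂, k₁), fun _ => ⟨hk₂, hk₁, h, heq.symm⟩⟩
    · exact ⟨(0, 0), fun h => absurd h hy⟩
  choose ψ hψ using hpair
  -- pigeonhole the survivors by their pair of levels
  have hmapsS : ∀ y ∈ S, ψ y ∈ Lset ×ˢ Lset := by
    intro y hy
    rw [mem_product]
    exact ⟨(hψ y hy).1, (hψ y hy).2.1⟩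
  have hprodcard : (Lset ×ˢ Lset).card * c ≤ S.card := by
    have hL1 : Lset.card ≤ K := by
      have := card_filter_le (range K) (fun k => ξ k = X₀)
      rwa [card_range] at this
    have hK2 : K * K ≤ 64 ^ a := by
      rw [hK]
      have h1 : (2:ℕ) ^ a ≤ 4 ^ a := Nat.pow_le_pow_left (by norm_num) a
      have h4 : (4:ℕ) ≤ 4 ^ a := by
        calc (4:ℕ) = 4 ^ 1 := (pow_one 4).symm
          _ ≤ 4 ^ a := Nat.pow_le_pow_right (by norm_num) ha
      have h5 : (4:ℕ) ^ a * (4 ^ a * 4 ^ a) = 64 ^ a := by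
        rw [← Nat.mul_pow, ← Nat.mul_pow]
      calc (4 ^ a + 2 ^ a) * (4 ^ a + 2 ^ a) ≤ (2 * 4 ^ a) * (2 * 4 ^ a) := by
            apply Nat.mul_le_mul <;> omega
        _ = 4 * (4 ^ a * 4 ^ a) := by ring
        _ ≤ 4 ^ a * (4 ^ a * 4 ^ a) := Nat.mul_le_mul_right _ h4
        _ = 64 ^ a := h5
    calc (Lset ×ˢ Lset).card * c = Lset.card * Lset.card * c := by rw [card_product]
      _ ≤ K * K * c := Nat.mul_le_mul_right c (Nat.mul_le_mul hL1 hL1)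
      _ ≤ 64 ^ a * c := Nat.mul_le_mul_right c hK2
      _ ≤ S.card := hScard
  have hprodne : (Lset ×ˢ Lset).Nonempty := by
    have h1 : 0 < Lset.card := by omega
    obtain ⟨k₀, hk₀⟩ := card_pos.1 h1
    exact ⟨(k₀, k₀), mem_product.2 ⟨hk₀, hk₀⟩⟩
  obtain ⟨kk, hkkmem, hCfib⟩ := exists_le_card_fiber_of_mul_le_card_of_maps_to hmapsS
    hprodne hprodcard
  obtain ⟨k, k'⟩ := kk
  set C₀ := {y ∈ S | ψ y = (k, k')} with hC₀def
  have hC₀S : C₀ ⊆ S := filter_subset _ _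
  have hC₀card : c ≤ C₀.card := hCfib
  have hC₀ne : C₀.Nonempty := card_pos.1 (by omega)
  obtain ⟨y₁, hy₁⟩ := hC₀ne
  have hpair₁ := hψ y₁ (hC₀S hy₁)
  rw [(mem_filter.1 hy₁).2] at hpair₁
  obtain ⟨hkL, hk'L, hklt, _⟩ := hpair₁
  have hkK : k < K := hLsub k hkL
  have hk'K : k' < K := hLsub k' hk'L
  have hz₀k : z₀ ∈ (L k hkK).Bs := hLS k hkK hz₀
  have hz₀k' : z₀ ∈ (L k' hk'K).Bs := hLS k' hk'K hz₀
  have hXcommon : (L k hkK).Wl \ (L k hkK).Dl = (L k' hk'K).Wl \ (L k' hk'K).Dl := by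
    rw [hLX k hkK hkL, hLX k' hk'K hk'L]
  set CN := {v ∈ (univ : Finset V) | ∀ w ∈ (L k hkK).Wl ∪ (L k' hk'K).Wl, H.Adj w v}
    with hCNdef
  have hCNadj : ∀ v ∈ CN, ∀ w ∈ (L k hkK).Wl ∪ (L k' hk'K).Wl, H.Adj w v :=
    fun v hv => (mem_filter.1 hv).2
  set e₀ := (L k hkK).cop z₀ hz₀k with he₀
  have hsiy : ∀ (y : V) (hy : y ∈ (L k hkK).Bs),
      s (((L k hkK).cop y hy).iy) = s e₀.iy := by
    intro y hy
    have h1 := ((L k hkK).cop y hy).card_W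
    have h2 := e₀.card_W
    rw [(L k hkK).hcW y hy] at h1
    rw [(L k hkK).hcW z₀ hz₀k] at h2
    omega
  have hCNcard : CN.card < s e₀.iy := by
    by_contra hle
    push_neg at hle
    obtain ⟨R, hRsub, hRcard⟩ := exists_subset_card_eq (s := CN) (n := s e₀.iy) hle
    exact rigid hsat (L k hkK) (L k' hk'K) hXcommon hz₀k hz₀k'
      (hyy k k' hklt hk'K) R (fun v hv => hCNadj v (hRsub hv)) hRcard
  have hPC : ∀ y (hy : y ∈ C₀), ((L k hkK).cop y (hLS k hkK (hC₀S hy))).P = CN := by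
    intro y hy
    have hyS := hC₀S hy
    have hyBk : y ∈ (L k hkK).Bs := hLS k hkK hyS
    have hyBk' : y ∈ (L k' hk'K).Bs := hLS k' hk'K hyS
    have hψy := hψ y hyS
    rw [(mem_filter.1 hy).2] at hψy
    have hPeq : Pk k y = Pk k' y := hψy.2.2.2
    rw [hPk k hkK y hyBk, hPk k' hk'K y hyBk'] at hPeq
    have hsub : ((L k hkK).cop y hyBk).P ⊆ CN := by
      intro v hv
      rw [hCNdef, mem_filter]
      refine ⟨mem_univ v, ?_⟩
      intro w hw
      rcases mem_union.1 hw with h | h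
      · exact (((L k hkK).cop y hyBk).P_adj_W v hv w
          (by rwa [(L k hkK).hcW y hyBk])).symm
      · have hv' : v ∈ ((L k' hk'K).cop y hyBk').P := by
          rw [← hPeq]
          exact hv
        exact (((L k' hk'K).cop y hyBk').P_adj_W v hv' w
          (by rwa [(L k' hk'K).hcW y hyBk'])).symm
    have hcardP := ((L k hkK).cop y hyBk).card_P
    rw [hsiy y hyBk] at hcardP
    exact eq_of_subset_of_card_le hsub (by omega)
  obtain ⟨C, hCsub, hCcard⟩ := exists_subset_card_eq (s := C₀) (n := c) hC₀card
  have hTsubW : (L k hkK).Tl ⊆ (L k hkK).Wl := by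
    rw [← (L k hkK).hT z₀ hz₀k]
    exact inter_subset_right
  have hdisj : Disjoint (L k hkK).Tl CN := by
    rw [Finset.disjoint_left]
    intro v hvT hvCN
    exact H.loopless.irrefl v (hCNadj v hvCN v (mem_union_left _ (hTsubW hvT)))
  refine good_of_finset ((L k hkK).Tl ∪ CN) (fun u hu => hSB (hC₀S (hCsub hu)))
    hCcard ?_ ?_
  · intro v hv u hu
    have huC₀ := hCsub hu
    have huS := hC₀S huC₀
    have huBk : u ∈ (L k hkK).Bs := hLS k hkK huS
    rcases mem_union.1 hv with h | h
    · have h2 := (L k hkK).hT u huBk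
      rw [← h2] at h
      exact mem_nb.1 (mem_inter.1 h).1
    · have hPu := hPC u huC₀
      have hv2 : v ∈ ((L k hkK).cop u (hLS k hkK (hC₀S huC₀))).P := by
        rw [hPu]
        exact h
      exact mem_nb.1 (((L k hkK).cop u (hLS k hkK (hC₀S huC₀))).P_subset_nb_x hv2)
  · rw [card_union_of_disjoint hdisj]
    have h1 := e₀.card_W
    rw [(L k hkK).hcW z₀ hz₀k] at h1
    have h2 := e₀.card_D
    rw [(L k hkK).hcD z₀ hz₀k] at h2
    have hy₁Bk : y₁ ∈ (L k hkK).Bs := hLS k hkK (hC₀S hy₁)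
    have h3 : ((L k hkK).cop y₁ hy₁Bk).P.card = CN.card := by
      rw [hPC y₁ hy₁]
    have h4 := ((L k hkK).cop y₁ hy₁Bk).card_P
    rw [hsiy y₁ hy₁Bk] at h4
    have h5 : (L k hkK).Wl \ (L k hkK).Tl ⊆ (L k hkK).Dl := by
      intro v hv
      obtain ⟨hvW, hvT⟩ := mem_sdiff.1 hv
      by_contra hnD
      apply hvT
      have hXz := e₀.X_subset_nb_x
      rw [(L k hkK).hcW z₀ hz₀k, (L k hkK).hcD z₀ hz₀k] at hXz
      rw [← (L k hkK).hT z₀ hz₀k]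
      exact mem_inter.2 ⟨hXz (mem_sdiff.2 ⟨hvW, hnD⟩), hvW⟩
    have h6 := card_le_card h5
    have h7 := card_sdiff_add_card_eq_card hTsubW
    have hτx := hτ e₀.ix
    have hcast : ((∑ i, s i : ℕ) : ℤ) = ∑ i, (s i : ℤ) := by push_cast; rfl
    have hSig : (∑ i, s i) ≤ (L k hkK).Tl.card + CN.card + s e₀.ix + 1 := by omega
    have hSig' : ((∑ i, s i : ℕ) : ℤ) ≤ ((L k hkK).Tl.card : ℤ) + (CN.card : ℤ)
        + (s e₀.ix : ℤ) + 1 := by exact_mod_cast hSig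
    rw [hcast] at hSig'
    push_cast
    linarith

lemma Rf_succ_le (a c : ℕ) (ha : 1 ≤ a) :
    ∀ K, Rf a c K + 1 ≤ 2 ^ (3 * a * K) * (64 ^ a * c + 1) := by
  intro K
  induction K with
  | zero => simp [Rf]
  | succ K ih =>
    have h8 : (8 : ℕ) ^ a = 2 ^ (3 * a) := by
      rw [pow_mul]
      norm_num
    have h2 : 2 ≤ (8 : ℕ) ^ a := by
      calc (2 : ℕ) ≤ 8 := by norm_num
        _ = 8 ^ 1 := (pow_one 8).symm
        _ ≤ 8 ^ a := Nat.pow_le_pow_right (by norm_num) ha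
    have step1 : Rf a c (K + 1) + 1 ≤ 8 ^ a * (Rf a c K + 1) := by
      show 8 ^ a * Rf a c K + 1 + 1 ≤ _
      have hmul := Nat.mul_add (8 ^ a) (Rf a c K) 1
      omega
    calc Rf a c (K + 1) + 1 ≤ 8 ^ a * (Rf a c K + 1) := step1
      _ ≤ 8 ^ a * (2 ^ (3 * a * K) * (64 ^ a * c + 1)) := Nat.mul_le_mul_left _ ih
      _ = 2 ^ (3 * a + 3 * a * K) * (64 ^ a * c + 1) := by
          rw [h8, ← mul_assoc, ← pow_add]
      _ = 2 ^ (3 * a * (K + 1)) * (64 ^ a * c + 1) := by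
          congr 2
          ring

lemma arith (a c : ℕ) (ha : 1 ≤ a) (hc : 2 ≤ c) :
    Rf a c (4 ^ a + 2 ^ a) + 1 ≤
      (c - 1) * (4 ^ a) ^ ((c - 1) * (4 ^ a) ^ c + 1) + (c - 1) * (4 ^ a) ^ c + 2 := by
  obtain ⟨d, rfl⟩ : ∃ d, c = d + 2 := ⟨c - 2, by omega⟩
  have hc1 : d + 2 - 1 = d + 1 := rfl
  rw [hc1]
  set A2 := (2 : ℕ) ^ a with hA2
  set A4 := (4 : ℕ) ^ a with hA4
  set Q := (4 : ℕ) ^ (a * (d + 2)) with hQ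
  have e24 : A2 * A2 = A4 := by rw [hA2, hA4, ← Nat.mul_pow]
  have h2A2 : 2 ≤ A2 := by
    calc (2 : ℕ) = 2 ^ 1 := (pow_one 2).symm
      _ ≤ 2 ^ a := Nat.pow_le_pow_right (by norm_num) ha
  have f1 : 2 * A2 ≤ A4 := by
    rw [← e24]
    exact Nat.mul_le_mul_right _ h2A2
  have f2 : 4 ≤ A4 := by
    calc (4 : ℕ) = 4 ^ 1 := (pow_one 4).symm
      _ ≤ 4 ^ a := Nat.pow_le_pow_right (by norm_num) ha
  have f3 : A4 * A4 ≤ Q := by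
    have h1 : A4 * A4 = 4 ^ (a * 2) := by
      rw [hA4, ← Nat.pow_add]
      congr 1
      ring
    rw [h1, hQ]
    exact Nat.pow_le_pow_right (by norm_num) (Nat.mul_le_mul_left a (by omega))
  have f4 : 2 * 2 ^ (d + 2) ≤ Q := by
    have h1 : 2 * 2 ^ (d + 2) ≤ 2 ^ (d + 2) * 2 ^ (d + 2) :=
      Nat.mul_le_mul_right _ (by
        calc (2 : ℕ) = 2 ^ 1 := (pow_one 2).symm
          _ ≤ 2 ^ (d + 2) := Nat.pow_le_pow_right (by norm_num) (by omega))
    have h2 : (2 : ℕ) ^ (d + 2) * 2 ^ (d + 2) = 4 ^ (d + 2) := by rw [← Nat.mul_pow]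
    have h3 : (4 : ℕ) ^ (d + 2) ≤ 4 ^ (a * (d + 2)) := by
      refine Nat.pow_le_pow_right (by norm_num) ?_
      calc d + 2 = 1 * (d + 2) := (one_mul _).symm
        _ ≤ a * (d + 2) := Nat.mul_le_mul_right _ ha
    rw [← hQ] at h3
    omega
  have t1 : 3 * a * (2 * A2) ≤ 3 * a * A4 := Nat.mul_le_mul_left _ f1
  have t2 : 12 * a ≤ 3 * a * A4 := by
    calc 12 * a = 3 * a * 4 := by ring
      _ ≤ 3 * a * A4 := Nat.mul_le_mul_left _ f2
  have t3 : 2 * (d + 2) ≤ Q := by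
    have h1 : d + 2 ≤ 2 ^ (d + 2) := le_of_lt (Nat.lt_two_pow_self (n := _))
    omega
  have t4 : 12 * a * A4 ≤ 3 * a * Q := by
    calc 12 * a * A4 = 3 * a * (4 * A4) := by ring
      _ ≤ 3 * a * (A4 * A4) := Nat.mul_le_mul_left _ (Nat.mul_le_mul_right _ f2)
      _ ≤ 3 * a * Q := Nat.mul_le_mul_left _ f3
  have t5 : 3 * a * Q ≤ 3 * (a * (d + 1) * Q) := by
    calc 3 * a * Q = 3 * (a * Q) := by ring
      _ ≤ 3 * (a * (d + 1) * Q) := by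
          refine Nat.mul_le_mul_left 3 ?_
          calc a * Q = (a * 1) * Q := by ring
            _ ≤ (a * (d + 1)) * Q :=
              Nat.mul_le_mul_right Q (Nat.mul_le_mul_left a (by omega))
  have t6 : Q ≤ a * (d + 1) * Q := by
    calc Q = 1 * Q := (one_mul Q).symm
      _ ≤ a * (d + 1) * Q := Nat.mul_le_mul_right Q (by
        have : 1 * 1 ≤ a * (d + 1) := Nat.mul_le_mul ha (by omega)
        omega)
  have hE2 : 2 * (3 * a * (A4 + A2) + 6 * a + (d + 2)) ≤
      2 * (2 * a * ((d + 1) * Q + 1)) := by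
    calc 2 * (3 * a * (A4 + A2) + 6 * a + (d + 2))
        = 6 * a * A4 + 3 * a * (2 * A2) + 12 * a + 2 * (d + 2) := by ring
      _ ≤ 6 * a * A4 + 3 * a * A4 + 3 * a * A4 + Q :=
          Nat.add_le_add (Nat.add_le_add (Nat.add_le_add le_rfl t1) t2) t3
      _ = 12 * a * A4 + Q := by ring
      _ ≤ 3 * a * Q + Q := Nat.add_le_add t4 le_rfl
      _ ≤ 3 * (a * (d + 1) * Q) + a * (d + 1) * Q := Nat.add_le_add t5 t6
      _ = 4 * (a * (d + 1) * Q) := by ring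
      _ ≤ 2 * (2 * a * ((d + 1) * Q + 1)) := by
          have h1 : 2 * (2 * a * ((d + 1) * Q + 1)) = 4 * (a * (d + 1) * Q) + 4 * a := by
            ring
          omega
  have hEfinal : 3 * a * (A4 + A2) + 6 * a + (d + 2) ≤ 2 * a * ((d + 1) * Q + 1) :=
    Nat.le_of_mul_le_mul_left hE2 (by norm_num)
  have hgQ : ((4 : ℕ) ^ a) ^ (d + 2) = Q := (pow_mul 4 a (d + 2)).symm
  have hpow : (2 : ℕ) ^ (3 * a * (A4 + A2) + 6 * a + (d + 2)) ≤
      ((4 : ℕ) ^ a) ^ ((d + 1) * Q + 1) := by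
    have h4a : (4 : ℕ) ^ a = 2 ^ (2 * a) := by
      rw [pow_mul]
      norm_num
    have hr : ((4 : ℕ) ^ a) ^ ((d + 1) * Q + 1) = 2 ^ (2 * a * ((d + 1) * Q + 1)) := by
      rw [h4a, ← pow_mul]
    rw [hr]
    exact Nat.pow_le_pow_right (by norm_num) hEfinal
  have h64 : (64 : ℕ) ^ a * (d + 2) + 1 ≤ 2 ^ (6 * a + (d + 2)) := by
    have h1 : (64 : ℕ) ^ a = 2 ^ (6 * a) := by
      rw [pow_mul]
      norm_num
    have h2 : 1 ≤ (64 : ℕ) ^ a := Nat.one_le_pow _ _ (by norm_num)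
    have h3 : d + 3 ≤ 2 ^ (d + 2) := by
      have := Nat.lt_two_pow_self (n := d + 2)
      omega
    calc 64 ^ a * (d + 2) + 1 ≤ 64 ^ a * (d + 2) + 64 ^ a := by omega
      _ = 64 ^ a * (d + 3) := by ring
      _ ≤ 64 ^ a * 2 ^ (d + 2) := Nat.mul_le_mul_left _ h3
      _ = 2 ^ (6 * a + (d + 2)) := by rw [h1, ← pow_add]
  calc Rf a (d + 2) (4 ^ a + 2 ^ a) + 1
      ≤ 2 ^ (3 * a * (4 ^ a + 2 ^ a)) * (64 ^ a * (d + 2) + 1) :=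
        Rf_succ_le a (d + 2) ha _
    _ ≤ 2 ^ (3 * a * (A4 + A2)) * 2 ^ (6 * a + (d + 2)) :=
        Nat.mul_le_mul_left _ h64
    _ = 2 ^ (3 * a * (A4 + A2) + 6 * a + (d + 2)) := by
        rw [← pow_add]
        congr 1
        ring
    _ ≤ ((4 : ℕ) ^ a) ^ ((d + 1) * Q + 1) := hpow
    _ ≤ (d + 1) * (4 ^ a) ^ ((d + 1) * (4 ^ a) ^ (d + 2) + 1) + (d + 1) * (4 ^ a) ^ (d + 2) + 2 := by
        rw [hgQ]
        have h1 : ((4 : ℕ) ^ a) ^ ((d + 1) * Q + 1) ≤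
            (d + 1) * ((4 : ℕ) ^ a) ^ ((d + 1) * Q + 1) := by
          calc ((4 : ℕ) ^ a) ^ ((d + 1) * Q + 1)
              = 1 * ((4 : ℕ) ^ a) ^ ((d + 1) * Q + 1) := (one_mul _).symm
            _ ≤ (d + 1) * ((4 : ℕ) ^ a) ^ ((d + 1) * Q + 1) :=
              Nat.mul_le_mul_right _ (by omega)
        omega

end BCN

theorem big_common_neighborhood
    (r : ℕ) (hr : 2 ≤ r) (s : Fin r → ℕ) (hs : ∀ i, 1 ≤ s i) (hmono : Monotone s)
    (V : Type) [Fintype V] (H : SimpleGraph V)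
    (hsat : IsSat (completeMultipartiteGraph (fun i => Fin (s i))) H)
    (a c g b : ℕ) (ha : 0 < a) (hc : 0 < c) (hg : g = 4 ^ a)
    (hb : b = (c - 1) * g ^ ((c - 1) * g ^ c + 1) + (c - 1) * g ^ c + 2)
    (B : Finset V) (hBind : ∀ u ∈ B, ∀ v ∈ B, ¬ H.Adj u v)
    (hBcard : B.card = b) (hBdeg : ∀ v ∈ B, (H.neighborSet v).ncard ≤ a) :
    ∃ C ⊆ B, C.card = c ∧
      (∑ i, (s i : ℤ)) - (s ⟨r - 1, by omega⟩ : ℤ) - 1 ≤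
        ((commonNbrs H ↑C).ncard : ℤ) := by
  classical
  haveI hdec : DecidableRel H.Adj := Classical.decRel _
  set τ : ℤ := (∑ i, (s i : ℤ)) - (s ⟨r - 1, by omega⟩ : ℤ) - 1 with hτdef
  have hτ : ∀ i : Fin r, τ ≤ (∑ j, (s j : ℤ)) - (s i : ℤ) - 1 := by
    intro i
    have h1 : s i ≤ s ⟨r - 1, by omega⟩ := by
      apply hmono
      rw [Fin.le_def]
      have h2 := i.isLt
      simp only
      omega
    have h2 : (s i : ℤ) ≤ (s ⟨r - 1, by omega⟩ : ℤ) := by exact_mod_cast h1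
    rw [hτdef]
    linarith
  have hBdeg' : ∀ v ∈ B, (BCN.nb H v).card ≤ a := by
    intro v hv
    rw [BCN.nb_card]
    exact hBdeg v hv
  have hsat' : IsSat (BCN.MP s) H := hsat
  suffices hGood : BCN.Good H B c τ by exact hGood
  rcases eq_or_lt_of_le (show 1 ≤ c from hc) with hc1 | hc2
  · -- c = 1
    have hc1' : c = 1 := hc1.symm
    subst hc1'
    have hb2 : b = 2 := by simpa using hb
    have hB2 : 1 < B.card := by omega
    obtain ⟨x, hx, y, hy, hxy⟩ := Finset.one_lt_card.1 hB2
    obtain ⟨e⟩ := BCN.exists_pcopy hsat' (show y ≠ x from hxy.symm) (hBind y hy x hx)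
    refine BCN.good_of_finset e.W (Finset.singleton_subset_iff.2 hx)
      (Finset.card_singleton x) ?_ ?_
    · intro v hv u hu
      rw [Finset.mem_singleton] at hu
      subst hu
      exact BCN.mem_nb.1 (e.W_subset_nb_y hv)
    · have hw := e.card_W
      have hτ' := hτ e.iy
      have hcast : ((∑ i, s i : ℕ) : ℤ) = ∑ i, (s i : ℤ) := by push_cast; rfl
      have hw' : (e.W.card : ℤ) + 1 + (s e.iy : ℤ) = ((∑ i, s i : ℕ) : ℤ) := by
        exact_mod_cast congrArg (Nat.cast : ℕ → ℤ) hw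
      rw [hcast] at hw'
      linarith
  · -- 2 ≤ c
    have harith := BCN.arith a c ha hc2
    have hRfb : BCN.Rf a c (4 ^ a + 2 ^ a) ≤ B.card := by
      rw [hBcard, hb, hg]
      omega
    rcases BCN.build_chain hsat' hBind hBdeg' hc hτ (4 ^ a + 2 ^ a) B subset_rfl hRfb with
      hG | ⟨L, S, hSsub, hScard, hLB, hLy, hLS, hyy⟩
    · exact hG
    · exact BCN.endgame hsat' ha hBdeg' hc hτ (4 ^ a + 2 ^ a) rfl L S hSsub hScard hLS hyy
end

section
/- Let r ≥ 2 and 1 ≤ s_1 ≤ … ≤ s_r be integers and s = s_1 + ⋯ + s_r. There exists a constant C (depending only on s) such that for every K_{s_1,…,s_r}-saturated graph H, the set D = {v ∈ V(H) : deg_H(v) ≤ s − 3} satisfies |D| ≤ C. -/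
open SimpleGraph Finset

section AuxLemmas

lemma prehomog (κ : Type) [Fintype κ] [Nonempty κ] [DecidableEq κ] :
    ∀ L : ℕ, ∃ N : ℕ, ∀ (T : Finset ℕ) (c : ℕ → ℕ → κ), N ≤ T.card →
      ∃ (a : ℕ → ℕ) (d : ℕ → κ),
        (∀ i j, i < j → j < L → a i < a j) ∧ (∀ i, i < L → a i ∈ T) ∧
        ∀ i j, i < j → j < L → c (a i) (a j) = d i := by
  intro L
  induction L with
  | zero =>
    exact ⟨0, fun T c _ => ⟨fun _ => 0, fun _ => Classical.arbitrary κ,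
      fun i j _ h => absurd h (Nat.not_lt_zero _),
      fun i h => absurd h (Nat.not_lt_zero _),
      fun i j _ h => absurd h (Nat.not_lt_zero _)⟩⟩
  | succ L ih =>
    obtain ⟨N, hN⟩ := ih
    refine ⟨Fintype.card κ * N + 1, fun T c hT => ?_⟩
    have hTne : T.Nonempty := by rw [← Finset.card_pos]; omega
    set a₀ := T.min' hTne with ha₀
    have hT'card : Fintype.card κ * N ≤ (T.erase a₀).card := by
      have := Finset.card_erase_of_mem (T.min'_mem hTne)
      rw [← ha₀] at this
      omega
    have hmaps : ∀ x ∈ T.erase a₀, c a₀ x ∈ (Finset.univ : Finset κ) :=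
      fun x _ => mem_univ _
    obtain ⟨k, -, hk⟩ := Finset.exists_le_card_fiber_of_mul_le_card_of_maps_to hmaps
      univ_nonempty (by simpa using hT'card)
    obtain ⟨a, d, hmono, hmem, hcol⟩ := hN ((T.erase a₀).filter fun x => c a₀ x = k) c hk
    have hsub : ∀ i, i < L → a i ∈ T.erase a₀ ∧ c a₀ (a i) = k := by
      intro i hi; have := hmem i hi; rwa [Finset.mem_filter] at this
    have hlt0 : ∀ i, i < L → a₀ < a i := fun i hi =>
      Finset.min'_lt_of_mem_erase_min' _ hTne (hsub i hi).1
    refine ⟨fun n => if n = 0 then a₀ else a (n - 1), fun n => if n = 0 then k else d (n - 1),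
      ?_, ?_, ?_⟩
    · intro i j hij hjL
      by_cases hi : i = 0
      · subst hi
        simp only [if_pos rfl, if_neg (by omega : j ≠ 0)]
        exact hlt0 (j - 1) (by omega)
      · simp only [if_neg hi, if_neg (by omega : j ≠ 0)]
        exact hmono _ _ (by omega) (by omega)
    · intro i hiL
      by_cases hi : i = 0
      · subst hi; simp only [if_pos rfl]; exact T.min'_mem hTne
      · simp only [if_neg hi]
        have := (hsub (i - 1) (by omega)).1
        rw [Finset.mem_erase] at this
        exact this.2
    · intro i j hij hjL
      by_cases hi : i = 0
      · subst hi
        simp only [if_pos rfl, if_neg (by omega : j ≠ 0)]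
        exact (hsub (j - 1) (by omega)).2
      · simp only [if_neg hi, if_neg (by omega : j ≠ 0)]
        exact hcol _ _ (by omega) (by omega)

/-- Finite Ramsey-type lemma: for any finite coloring there is `N` such that among any `N`
naturals there are 4 whose increasing pairs all get the same color. -/
lemma ramsey4 (κ : Type) [Fintype κ] [Nonempty κ] [DecidableEq κ] :
    ∃ N : ℕ, ∀ (T : Finset ℕ) (c : ℕ → ℕ → κ), N ≤ T.card →
      ∃ b : Fin 4 → ℕ, StrictMono b ∧ (∀ i, b i ∈ T) ∧
        ∃ k : κ, ∀ i j : Fin 4, i < j → c (b i) (b j) = k := by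
  obtain ⟨N, hN⟩ := prehomog κ (3 * Fintype.card κ + 1)
  refine ⟨N, fun T c hT => ?_⟩
  obtain ⟨a, d, hmono, hmem, hcol⟩ := hN T c hT
  set L := 3 * Fintype.card κ + 1 with hL
  have hmaps : ∀ x ∈ Finset.range L, d x ∈ (Finset.univ : Finset κ) :=
    fun x _ => mem_univ _
  obtain ⟨k, -, hk⟩ := Finset.exists_lt_card_fiber_of_mul_lt_card_of_maps_to
    (t := (Finset.univ : Finset κ)) (n := 3) hmaps
    (by simp only [Finset.card_univ, Finset.card_range]; omega)
  have hk4 : 4 ≤ ((Finset.range L).filter fun x => d x = k).card := hk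
  obtain ⟨S, hSsub, hScard⟩ := Finset.exists_subset_card_eq hk4
  have he : ∀ i : Fin 4, (S.orderIsoOfFin hScard i : ℕ) ∈ (Finset.range L).filter
      fun x => d x = k := fun i => hSsub (S.orderIsoOfFin hScard i).2
  have heL : ∀ i : Fin 4, (S.orderIsoOfFin hScard i : ℕ) < L := by
    intro i; have := he i; rw [Finset.mem_filter, Finset.mem_range] at this; exact this.1
  have hed : ∀ i : Fin 4, d (S.orderIsoOfFin hScard i : ℕ) = k := by
    intro i; have := he i; rw [Finset.mem_filter] at this; exact this.2
  have hemono : ∀ i j : Fin 4, i < j →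
      (S.orderIsoOfFin hScard i : ℕ) < (S.orderIsoOfFin hScard j : ℕ) := by
    intro i j hij
    exact_mod_cast (S.orderIsoOfFin hScard).lt_iff_lt.mpr hij
  refine ⟨fun i => a (S.orderIsoOfFin hScard i), ?_, ?_, k, ?_⟩
  · intro i j hij
    exact hmono _ _ (hemono i j hij) (heL j)
  · intro i
    exact hmem _ (heL i)
  · intro i j hij
    rw [hcol _ _ (hemono i j hij) (heL j), hed i]

lemma greedy_indep {V : Type} [Fintype V] [DecidableEq V] (G : SimpleGraph V)
    [DecidableRel G.Adj] (d : ℕ) :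
    ∀ (D : Finset V), (∀ v ∈ D, (G.neighborFinset v).card ≤ d) →
      ∃ I : Finset V, I ⊆ D ∧ (∀ x ∈ I, ∀ y ∈ I, x ≠ y → ¬ G.Adj x y) ∧
        D.card ≤ (d + 1) * I.card := by
  intro D
  induction D using Finset.strongInductionOn with
  | _ D ih =>
    intro hdeg
    rcases D.eq_empty_or_nonempty with hD | ⟨v, hv⟩
    · exact ⟨∅, by simp [hD]⟩
    · set D' := D \ insert v (G.neighborFinset v) with hD'
      have hss : D' ⊂ D := by
        refine Finset.ssubset_iff_of_subset (Finset.sdiff_subset) |>.mpr ?_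
        exact ⟨v, hv, by simp [hD']⟩
      obtain ⟨I, hIsub, hIind, hIcard⟩ := ih D' hss
        (fun w hw => hdeg w (Finset.mem_sdiff.mp hw).1)
      have hvI : v ∉ I := by
        intro hvI
        have := hIsub hvI
        rw [hD', Finset.mem_sdiff] at this
        exact this.2 (Finset.mem_insert_self _ _)
      refine ⟨insert v I, ?_, ?_, ?_⟩
      · intro x hx
        rcases Finset.mem_insert.mp hx with rfl | hx
        · exact hv
        · exact (Finset.mem_sdiff.mp (hIsub hx)).1
      · have hvadj : ∀ x ∈ I, ¬ G.Adj v x := by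
          intro x hx hadj
          have := (Finset.mem_sdiff.mp (hIsub hx)).2
          exact this (Finset.mem_insert_of_mem (by rwa [SimpleGraph.mem_neighborFinset]))
        intro x hx y hy hxy
        rcases Finset.mem_insert.mp hx with hx' | hx'
        · rcases Finset.mem_insert.mp hy with hy' | hy'
          · exact absurd (hx'.trans hy'.symm) hxy
          · subst hx'; exact hvadj y hy'
        · rcases Finset.mem_insert.mp hy with hy' | hy'
          · subst hy'; intro hadj; exact hvadj x hx' hadj.symm
          · exact hIind x hx' y hy' hxy
      · have h1 : D.card ≤ D'.card + (d + 1) := by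
          have hsub2 : D ⊆ D' ∪ insert v (G.neighborFinset v) := by
            intro x hx
            rw [Finset.mem_union, hD', Finset.mem_sdiff]
            by_cases hxm : x ∈ insert v (G.neighborFinset v)
            · exact Or.inr hxm
            · exact Or.inl ⟨hx, hxm⟩
          calc D.card ≤ (D' ∪ insert v (G.neighborFinset v)).card := Finset.card_le_card hsub2
            _ ≤ D'.card + (insert v (G.neighborFinset v)).card := Finset.card_union_le _ _
            _ ≤ D'.card + (d + 1) := by
                have h3 := Finset.card_insert_le v (G.neighborFinset v)
                have h4 := hdeg v hv
                omega
        have h2 : (insert v I).card = I.card + 1 := by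
          rw [Finset.card_insert_of_notMem hvI]
        rw [h2]
        calc D.card ≤ D'.card + (d+1) := h1
          _ ≤ (d+1) * I.card + (d+1) := by omega
          _ = (d+1) * (I.card + 1) := by ring

lemma sat_pair {r : ℕ} (s : Fin r → ℕ) {V : Type} (H : SimpleGraph V)
    (hfree : ¬ HasCopy (completeMultipartiteGraph fun i => Fin (s i)) H)
    {u v : V}
    (hcopy : HasCopy (completeMultipartiteGraph fun i => Fin (s i))
      (H ⊔ fromEdgeSet {s(u, v)})) :
    ∃ f : (Σ i, Fin (s i)) → V, Function.Injective f ∧ ∃ xj xk : (Σ i, Fin (s i)),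
      f xj = u ∧ f xk = v ∧ xj.1 ≠ xk.1 ∧
      ∀ x y : (Σ i, Fin (s i)), x.1 ≠ y.1 → (x ≠ xj ∨ y ≠ xk) → (x ≠ xk ∨ y ≠ xj) →
        H.Adj (f x) (f y) := by
  obtain ⟨φ, hinj⟩ := hcopy
  have hadj : ∀ x y : (Σ i, Fin (s i)), x.1 ≠ y.1 →
      H.Adj (φ x) (φ y) ∨ (φ x = u ∧ φ y = v) ∨ (φ x = v ∧ φ y = u) := by
    intro x y hxy
    have := φ.map_rel' (by simpa using hxy)
    rw [sup_adj, fromEdgeSet_adj] at this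
    rcases this with h | ⟨h, -⟩
    · exact Or.inl h
    · rw [Set.mem_singleton_iff, Sym2.eq_iff] at h
      rcases h with ⟨h1, h2⟩ | ⟨h1, h2⟩
      · exact Or.inr (Or.inl ⟨h1, h2⟩)
      · exact Or.inr (Or.inr ⟨h1, h2⟩)
  by_cases hex : ∃ xj xk : (Σ i, Fin (s i)), φ xj = u ∧ φ xk = v ∧ xj.1 ≠ xk.1
  · obtain ⟨xj, xk, hxj, hxk, hslot⟩ := hex
    refine ⟨φ, hinj, xj, xk, hxj, hxk, hslot, ?_⟩
    intro x y hxy h1 h2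
    rcases hadj x y hxy with h | ⟨ha, hb⟩ | ⟨ha, hb⟩
    · exact h
    · have hx : x = xj := hinj (ha.trans hxj.symm)
      have hy : y = xk := hinj (hb.trans hxk.symm)
      rcases h1 with h1 | h1
      · exact absurd hx h1
      · exact absurd hy h1
    · have hx : x = xk := hinj (ha.trans hxk.symm)
      have hy : y = xj := hinj (hb.trans hxj.symm)
      rcases h2 with h2 | h2
      · exact absurd hx h2
      · exact absurd hy h2
  · exfalso
    apply hfree
    refine ⟨⟨φ, ?_⟩, hinj⟩
    intro x y hxy
    have hxy' : x.1 ≠ y.1 := by simpa using hxy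
    rcases hadj x y hxy' with h | ⟨ha, hb⟩ | ⟨ha, hb⟩
    · exact h
    · exact absurd ⟨x, y, ha, hb, hxy'⟩ hex
    · exact absurd ⟨y, x, hb, ha, hxy'.symm⟩ hex

lemma slot_card {r : ℕ} (s : Fin r → ℕ) (i : Fin r) :
    (Finset.univ.filter fun x : (Σ j, Fin (s j)) => x.1 = i).card = s i := by
  classical
  rw [← Fintype.card_subtype]
  have e : {x : (Σ j, Fin (s j)) // x.1 = i} ≃ Fin (s i) :=
    { toFun := fun x => Fin.cast (congrArg s x.2) x.1.2
      invFun := fun n => ⟨⟨i, n⟩, rfl⟩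
      left_inv := by
        rintro ⟨⟨j, m⟩, h⟩
        dsimp at h
        subst h
        rfl
      right_inv := fun n => rfl }
  rw [Fintype.card_congr e, Fintype.card_fin]

lemma sigma_card {r : ℕ} (s : Fin r → ℕ) :
    Fintype.card (Σ j, Fin (s j)) = ∑ i, s i := by
  classical
  rw [Fintype.card_sigma]
  simp

lemma finset_image_injOn_cancel {β γ : Type*} [DecidableEq γ] {g : β → γ}
    {A s t : Finset β} (hg : Set.InjOn g ↑A) (hs : s ⊆ A) (ht : t ⊆ A)
    (h : s.image g = t.image g) : s = t := by
  have h' : g '' ↑s = g '' ↑t := by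
    rw [← Finset.coe_image, ← Finset.coe_image, h]
  have := (hg.image_eq_image_iff (by exact_mod_cast hs) (by exact_mod_cast ht)).mp h'
  exact_mod_cast this

lemma exists_injOn_fin {V : Type} [DecidableEq V] (A : Finset V) (t : ℕ) (ht : 0 < t)
    (hA : A.card ≤ t) : ∃ g : V → Fin t, Set.InjOn g ↑A := by
  refine ⟨fun w => if hw : w ∈ A then Fin.castLE hA (A.equivFin ⟨w, hw⟩) else ⟨0, ht⟩, ?_⟩
  intro a ha b hb hab
  rw [Finset.mem_coe] at ha hb
  simp only [dif_pos ha, dif_pos hb] at hab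
  have h1 := Fin.castLE_injective hA hab
  have h2 := A.equivFin.injective h1
  exact congrArg Subtype.val h2

end AuxLemmas

theorem low_degree_set_bounded
    (r : ℕ) (hr : 2 ≤ r) (s : Fin r → ℕ) (hs : ∀ i, 1 ≤ s i) (hmono : Monotone s) :
    ∃ C : ℕ, ∀ (V : Type) [Fintype V] (H : SimpleGraph V),
      IsSat (completeMultipartiteGraph (fun i => Fin (s i))) H →
      {v : V | ((H.neighborSet v).ncard : ℤ) ≤ (∑ i, (s i : ℤ)) - 3}.ncard ≤ C := by
  classical
  set S : ℕ := ∑ i, s i with hSdef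
  set t : ℕ := S - 2 with htdef
  -- an element of the vertex type of F
  have hx₀ : (Σ i, Fin (s i)) := ⟨⟨0, by omega⟩, ⟨0, hs _⟩⟩
  -- the color type
  set κ : Type := (((Σ i, Fin (s i)) × (Σ i, Fin (s i))) ×
      ((Σ i, Fin (s i)) → Option (Fin t)) × ((Σ i, Fin (s i)) → Option (Fin t)) ×
      Finset (Fin t) × Finset (Fin t)) with hκdef
  haveI hκne : Nonempty κ := ⟨⟨⟨hx₀, hx₀⟩, fun _ => none, fun _ => none, ∅, ∅⟩⟩
  obtain ⟨N, hN⟩ := ramsey4 κ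
  refine ⟨(S - 2) * N, ?_⟩
  intro V _ H hsat
  by_contra hbig
  push_neg at hbig
  set D : Set V := {v : V | ((H.neighborSet v).ncard : ℤ) ≤ (∑ i, (s i : ℤ)) - 3} with hDdef
  have hDfin : D.Finite := Set.toFinite _
  have hDcard : D.ncard = hDfin.toFinset.card := Set.ncard_eq_toFinset_card _ hDfin
  have hsum : (∑ i, (s i : ℤ)) = (S : ℤ) := by rw [hSdef]; push_cast; rfl
  have hDne : D.Nonempty := by
    rw [← Set.ncard_pos hDfin]
    omega
  have hS3 : 3 ≤ S := by
    by_contra hS3'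
    obtain ⟨v, hv⟩ := hDne
    rw [hDdef, Set.mem_setOf_eq, hsum] at hv
    have h0 : (0 : ℤ) ≤ ((H.neighborSet v).ncard : ℤ) := Int.natCast_nonneg _
    have h2 : (S : ℤ) ≤ 2 := by exact_mod_cast Nat.le_of_lt_succ (by omega)
    omega
  have htpos : 0 < t := by omega
  letI : DecidableRel H.Adj := Classical.decRel _
  have hncard_nf : ∀ v : V, (H.neighborSet v).ncard = (H.neighborFinset v).card := by
    intro v
    rw [Set.ncard_eq_toFinset_card']
    congr 1
  have hdeg : ∀ v ∈ hDfin.toFinset, (H.neighborFinset v).card ≤ S - 3 := by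
    intro v hv
    rw [Set.Finite.mem_toFinset] at hv
    rw [hDdef, Set.mem_setOf_eq, hsum, hncard_nf] at hv
    omega
  obtain ⟨I, hIsub, hind, hIcard⟩ := greedy_indep H (S - 3) hDfin.toFinset hdeg
  have hIcard' : hDfin.toFinset.card ≤ (S - 2) * I.card := by
    have he : S - 3 + 1 = S - 2 := by omega
    rwa [he] at hIcard
  have hNI : N ≤ I.card := by
    rw [hDcard] at hbig
    have h1 : (S - 2) * N < (S - 2) * I.card := lt_of_lt_of_le hbig hIcard'
    exact le_of_lt (lt_of_mul_lt_mul_left h1 (Nat.zero_le _))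
  -- closed neighborhoods
  set M : V → Finset V := fun u => insert u (H.neighborFinset u) with hMdef
  have hMself : ∀ u : V, u ∈ M u := fun u => Finset.mem_insert_self _ _
  have hMadj : ∀ u x : V, H.Adj u x → x ∈ M u := fun u x h =>
    Finset.mem_insert_of_mem (by rwa [SimpleGraph.mem_neighborFinset])
  have hMmem : ∀ u x : V, x ∈ M u → x = u ∨ H.Adj u x := by
    intro u x hx
    rcases Finset.mem_insert.mp hx with h | h
    · exact Or.inl h
    · exact Or.inr (by rwa [SimpleGraph.mem_neighborFinset] at h)
  have hMcard : ∀ u ∈ hDfin.toFinset, (M u).card ≤ t := by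
    intro u hu
    have h1 := hdeg u hu
    have h2 : (M u).card ≤ (H.neighborFinset u).card + 1 := by
      rw [hMdef]
      exact Finset.card_insert_le _ _
    omega
  -- injections into Fin t
  have hιex : ∀ u : V, ∃ g : V → Fin t, u ∈ hDfin.toFinset → Set.InjOn g ↑(M u) := by
    intro u
    by_cases hu : u ∈ hDfin.toFinset
    · obtain ⟨g, hg⟩ := exists_injOn_fin (M u) t htpos (hMcard u hu)
      exact ⟨g, fun _ => hg⟩
    · exact ⟨fun _ => ⟨0, htpos⟩, fun h => absurd h hu⟩
  choose ι hι using hιex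
  -- the saturation pair structure
  have key : ∀ u w : V, u ≠ w → ¬H.Adj u w →
      ∃ f : (Σ i, Fin (s i)) → V, Function.Injective f ∧ ∃ xj xk : (Σ i, Fin (s i)),
        f xj = u ∧ f xk = w ∧ xj.1 ≠ xk.1 ∧
        ∀ x y : (Σ i, Fin (s i)), x.1 ≠ y.1 → (x ≠ xj ∨ y ≠ xk) → (x ≠ xk ∨ y ≠ xj) →
          H.Adj (f x) (f y) :=
    fun u w h1 h2 => sat_pair s H hsat.1 (hsat.2 u w h1 h2)
  choose fP hPinj xjP xkP hPu hPw hPslot hPadj using key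
  -- the coloring
  set c : ℕ → ℕ → κ := fun i j =>
    if h : i < I.card ∧ j < I.card then
      (let u := ((I.equivFin.symm ⟨i, h.1⟩ : I) : V)
       let w := ((I.equivFin.symm ⟨j, h.2⟩ : I) : V)
       if h2 : u ≠ w ∧ ¬ H.Adj u w then
         ⟨⟨xjP u w h2.1 h2.2, xkP u w h2.1 h2.2⟩,
          fun x => if fP u w h2.1 h2.2 x ∈ M u then some (ι u (fP u w h2.1 h2.2 x)) else none,
          fun x => if fP u w h2.1 h2.2 x ∈ M w then some (ι w (fP u w h2.1 h2.2 x)) else none,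
          (M u ∩ M w).image (ι u), (M u ∩ M w).image (ι w)⟩
       else Classical.arbitrary κ)
    else Classical.arbitrary κ with hcdef
  obtain ⟨b, hbmono, hbmem, k₀, hk₀⟩ := hN (Finset.range I.card) c
    (by rwa [Finset.card_range])
  have hbI : ∀ p : Fin 4, b p < I.card := by
    intro p
    have := hbmem p
    rwa [Finset.mem_range] at this
  set vv : Fin 4 → V := fun p => ((I.equivFin.symm ⟨b p, hbI p⟩ : I) : V) with hvvdef
  have hvvI : ∀ p, vv p ∈ I := fun p => Subtype.coe_prop _
  have hvvD : ∀ p, vv p ∈ hDfin.toFinset := fun p => hIsub (hvvI p)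
  have hvvne : ∀ p q : Fin 4, p ≠ q → vv p ≠ vv q := by
    intro p q hpq heq
    apply hpq
    have h1 : (⟨b p, hbI p⟩ : Fin I.card) = ⟨b q, hbI q⟩ :=
      I.equivFin.symm.injective (Subtype.coe_injective heq)
    have h2 : b p = b q := by
      simpa using congrArg Fin.val h1
    exact hbmono.injective h2
  have hvvnadj : ∀ p q : Fin 4, p ≠ q → ¬ H.Adj (vv p) (vv q) :=
    fun p q hpq => hind _ (hvvI p) _ (hvvI q) (hvvne p q hpq)
  obtain ⟨⟨XJ, XK⟩, Pi1, Pi2, Y1, Y2⟩ := k₀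
  have pairData : ∀ p q : Fin 4, p < q → ∃ f : (Σ i, Fin (s i)) → V,
      Function.Injective f ∧ f XJ = vv p ∧ f XK = vv q ∧ XJ.1 ≠ XK.1 ∧
      (∀ x y : (Σ i, Fin (s i)), x.1 ≠ y.1 → (x ≠ XJ ∨ y ≠ XK) → (x ≠ XK ∨ y ≠ XJ) →
        H.Adj (f x) (f y)) ∧
      (∀ x, f x ∈ M (vv p) ↔ Pi1 x ≠ none) ∧
      (∀ x, f x ∈ M (vv p) → Pi1 x = some (ι (vv p) (f x))) ∧
      (∀ x, f x ∈ M (vv q) ↔ Pi2 x ≠ none) ∧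
      (∀ x, f x ∈ M (vv q) → Pi2 x = some (ι (vv q) (f x))) ∧
      (M (vv p) ∩ M (vv q)).image (ι (vv p)) = Y1 ∧
      (M (vv p) ∩ M (vv q)).image (ι (vv q)) = Y2 := by
    intro p q hpq
    have hne := hvvne p q hpq.ne
    have hnadj := hvvnadj p q hpq.ne
    have h1 := hk₀ p q hpq
    simp only [hcdef] at h1
    rw [dif_pos (⟨hbI p, hbI q⟩ : b p < I.card ∧ b q < I.card)] at h1
    rw [dif_pos (⟨hne, hnadj⟩ :
      ((I.equivFin.symm ⟨b p, hbI p⟩ : I) : V) ≠ ((I.equivFin.symm ⟨b q, hbI q⟩ : I) : V) ∧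
      ¬ H.Adj ((I.equivFin.symm ⟨b p, hbI p⟩ : I) : V)
        ((I.equivFin.symm ⟨b q, hbI q⟩ : I) : V))] at h1
    have hxj := congrArg (fun z : κ => z.1.1) h1
    have hxk := congrArg (fun z : κ => z.1.2) h1
    have hp1 := congrArg (fun z : κ => z.2.1) h1
    have hp2 := congrArg (fun z : κ => z.2.2.1) h1
    have hY1' := congrArg (fun z : κ => z.2.2.2.1) h1
    have hY2' := congrArg (fun z : κ => z.2.2.2.2) h1
    dsimp only at hxj hxk hp1 hp2 hY1' hY2'
    refine ⟨fP (vv p) (vv q) hne hnadj, hPinj _ _ _ _, ?_, ?_, ?_, ?_, ?_, ?_, ?_, ?_, ?_, ?_⟩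
    · rw [← hxj]; exact hPu _ _ _ _
    · rw [← hxk]; exact hPw _ _ _ _
    · rw [← hxj, ← hxk]; exact hPslot _ _ _ _
    · rw [← hxj, ← hxk]; exact hPadj _ _ _ _
    · intro x
      have hx := congrFun hp1 x
      by_cases hm : fP (vv p) (vv q) hne hnadj x ∈ M (vv p)
      · rw [if_pos hm] at hx
        exact ⟨fun _ => by rw [← hx]; simp, fun _ => hm⟩
      · rw [if_neg hm] at hx
        exact ⟨fun h => absurd h hm, fun h => absurd hx.symm h⟩
    · intro x hm
      have hx := congrFun hp1 x
      rw [if_pos hm] at hx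
      exact hx.symm
    · intro x
      have hx := congrFun hp2 x
      by_cases hm : fP (vv p) (vv q) hne hnadj x ∈ M (vv q)
      · rw [if_pos hm] at hx
        exact ⟨fun _ => by rw [← hx]; simp, fun _ => hm⟩
      · rw [if_neg hm] at hx
        exact ⟨fun h => absurd h hm, fun h => absurd hx.symm h⟩
    · intro x hm
      have hx := congrFun hp2 x
      rw [if_pos hm] at hx
      exact hx.symm
    · exact hY1'
    · exact hY2'
  choose ff hffinj hffXJ hffXK hffslot hffadj hffM1 hffpi1 hffM2 hffpi2 hffY1 hffY2
    using pairData
  have h01 : (0 : Fin 4) < 1 := by decide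
  have h02 : (0 : Fin 4) < 2 := by decide
  have h03 : (0 : Fin 4) < 3 := by decide
  have h12 : (1 : Fin 4) < 2 := by decide
  have h13 : (1 : Fin 4) < 3 := by decide
  have h23 : (2 : Fin 4) < 3 := by decide
  have hsb : XJ.1 ≠ XK.1 := hffslot 0 1 h01
  have hXJK : XJ ≠ XK := fun h => hsb (by rw [h])
  -- agreement lemmas
  have G1 : ∀ (p q q' : Fin 4) (h : p < q) (h' : p < q') (x : (Σ i, Fin (s i))),
      Pi1 x ≠ none → ff p q h x = ff p q' h' x := by
    intro p q q' h h' x hx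
    have m1 : ff p q h x ∈ M (vv p) := (hffM1 p q h x).mpr hx
    have m2 : ff p q' h' x ∈ M (vv p) := (hffM1 p q' h' x).mpr hx
    have e1 := hffpi1 p q h x m1
    have e2 := hffpi1 p q' h' x m2
    rw [e1] at e2
    exact hι (vv p) (hvvD p) (Finset.mem_coe.mpr m1) (Finset.mem_coe.mpr m2)
      (Option.some.inj e2)
  have G2 : ∀ (p p' q : Fin 4) (h : p < q) (h' : p' < q) (x : (Σ i, Fin (s i))),
      Pi2 x ≠ none → ff p q h x = ff p' q h' x := by
    intro p p' q h h' x hx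
    have m1 : ff p q h x ∈ M (vv q) := (hffM2 p q h x).mpr hx
    have m2 : ff p' q h' x ∈ M (vv q) := (hffM2 p' q h' x).mpr hx
    have e1 := hffpi2 p q h x m1
    have e2 := hffpi2 p' q h' x m2
    rw [e1] at e2
    exact hι (vv q) (hvvD q) (Finset.mem_coe.mpr m1) (Finset.mem_coe.mpr m2)
      (Option.some.inj e2)
  -- common core
  have hYpair1 : ∀ (p q q' : Fin 4) (h : p < q) (h' : p < q'),
      M (vv p) ∩ M (vv q) = M (vv p) ∩ M (vv q') := by
    intro p q q' h h'
    refine finset_image_injOn_cancel (hι (vv p) (hvvD p))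
      Finset.inter_subset_left Finset.inter_subset_left ?_
    rw [hffY1 p q h, hffY1 p q' h']
  have hYpair2 : ∀ (p p' q : Fin 4) (h : p < q) (h' : p' < q),
      M (vv p) ∩ M (vv q) = M (vv p') ∩ M (vv q) := by
    intro p p' q h h'
    refine finset_image_injOn_cancel (hι (vv q) (hvvD q))
      Finset.inter_subset_right Finset.inter_subset_right ?_
    rw [hffY2 p q h, hffY2 p' q h']
  have hY02 : M (vv 0) ∩ M (vv 2) = M (vv 0) ∩ M (vv 1) := hYpair1 0 2 1 h02 h01
  have hY03 : M (vv 0) ∩ M (vv 3) = M (vv 0) ∩ M (vv 1) := hYpair1 0 3 1 h03 h01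
  have hY12 : M (vv 1) ∩ M (vv 2) = M (vv 0) ∩ M (vv 1) :=
    (hYpair2 1 0 2 h12 h02).trans hY02
  have hY13 : M (vv 1) ∩ M (vv 3) = M (vv 0) ∩ M (vv 1) :=
    (hYpair2 1 0 3 h13 h03).trans hY03
  have hY23 : M (vv 2) ∩ M (vv 3) = M (vv 0) ∩ M (vv 1) :=
    (hYpair2 2 0 3 h23 h03).trans hY03
  -- the low sets
  set ρset : Finset (Σ i, Fin (s i)) :=
    Finset.univ.filter (fun x => Pi1 x = none ∧ x ≠ XK) with hρdef
  set σset : Finset (Σ i, Fin (s i)) :=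
    Finset.univ.filter (fun x => Pi2 x = none ∧ x ≠ XJ) with hσdef
  have hρslot : ∀ x ∈ ρset, x.1 = XJ.1 ∧ x ≠ XJ := by
    intro x hx
    rw [hρdef, Finset.mem_filter] at hx
    obtain ⟨-, hx1, hx2⟩ := hx
    have hnm : ff 0 1 h01 x ∉ M (vv 0) := by
      rw [hffM1 0 1 h01 x]
      simp [hx1]
    constructor
    · by_contra hne1
      apply hnm
      apply hMadj
      have := hffadj 0 1 h01 XJ x (fun h => hne1 h.symm) (Or.inr hx2) (Or.inl hXJK)
      rwa [hffXJ 0 1 h01] at this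
    · intro hxe
      subst hxe
      apply hnm
      rw [hffXJ 0 1 h01]
      exact hMself _
  have hσslot : ∀ x ∈ σset, x.1 = XK.1 ∧ x ≠ XK := by
    intro x hx
    rw [hσdef, Finset.mem_filter] at hx
    obtain ⟨-, hx1, hx2⟩ := hx
    have hnm : ff 0 1 h01 x ∉ M (vv 1) := by
      rw [hffM2 0 1 h01 x]
      simp [hx1]
    constructor
    · by_contra hne1
      apply hnm
      apply hMadj
      have := hffadj 0 1 h01 XK x (fun h => hne1 h.symm) (Or.inl (fun h => hXJK h.symm))
        (Or.inr hx2)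
      rwa [hffXK 0 1 h01] at this
    · intro hxe
      subst hxe
      apply hnm
      rw [hffXK 0 1 h01]
      exact hMself _
  by_cases hcase : ρset = ∅ ∨ σset = ∅
  · -- CASE A : degree contradiction at vv 1
    have hAc : ∀ x : (Σ i, Fin (s i)), x.1 ≠ XJ.1 → x ≠ XK →
        H.Adj (vv 1) (ff 1 2 h12 x) := by
      intro x hx1 hx2
      have := hffadj 1 2 h12 XJ x (fun h => hx1 h.symm) (Or.inr hx2) (Or.inl hXJK)
      rwa [hffXJ 1 2 h12] at this
    have hBc : ∀ x : (Σ i, Fin (s i)), x.1 = XJ.1 → x ≠ XJ →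
        H.Adj (vv 1) (ff 0 1 h01 x) := by
      intro x hx1 hx2
      have hslot' : XK.1 ≠ x.1 := by rw [hx1]; exact fun h => hsb h.symm
      have := hffadj 0 1 h01 XK x hslot' (Or.inl (fun h => hXJK h.symm)) (Or.inr hx2)
      rwa [hffXK 0 1 h01] at this
    set Ac : Finset (Σ i, Fin (s i)) := (Finset.univ.filter fun x => ¬ x.1 = XJ.1).erase XK
      with hAcdef
    set Bc : Finset (Σ i, Fin (s i)) := (Finset.univ.filter fun x => x.1 = XJ.1).erase XJ
      with hBcdef
    have hAcmem : ∀ x ∈ Ac, x.1 ≠ XJ.1 ∧ x ≠ XK := by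
      intro x hx
      rw [hAcdef, Finset.mem_erase, Finset.mem_filter] at hx
      exact ⟨hx.2.2, hx.1⟩
    have hBcmem : ∀ x ∈ Bc, x.1 = XJ.1 ∧ x ≠ XJ := by
      intro x hx
      rw [hBcdef, Finset.mem_erase, Finset.mem_filter] at hx
      exact ⟨hx.2.2, hx.1⟩
    have hdisj : Disjoint (Ac.image (ff 1 2 h12)) (Bc.image (ff 0 1 h01)) := by
      rw [Finset.disjoint_left]
      intro m hmA hmB
      obtain ⟨x, hxAc, hxm⟩ := Finset.mem_image.mp hmA
      obtain ⟨y, hyBc, hym⟩ := Finset.mem_image.mp hmB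
      obtain ⟨hx1, hx2⟩ := hAcmem x hxAc
      obtain ⟨hy1, hy2⟩ := hBcmem y hyBc
      have hxM1 : ff 1 2 h12 x ∈ M (vv 1) := hMadj _ _ (hAc x hx1 hx2)
      have hyM1 : ff 0 1 h01 y ∈ M (vv 1) := hMadj _ _ (hBc y hy1 hy2)
      have hyne : y ≠ XK := by
        intro h
        apply hsb
        rw [← h] at *
        exact hy1.symm
      have hxnej : x ≠ XJ := fun h => hx1 (by rw [h])
      rcases hcase with hρe | hσe
      · -- ρset = ∅ : Pi1 y ≠ none
        have hy1n : Pi1 y ≠ none := by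
          intro hn
          have hmem' : y ∈ ρset := by
            rw [hρdef, Finset.mem_filter]
            exact ⟨Finset.mem_univ _, hn, hyne⟩
          rw [hρe] at hmem'
          exact absurd hmem' (Finset.notMem_empty _)
        have hyM0 : ff 0 1 h01 y ∈ M (vv 0) := (hffM1 0 1 h01 y).mpr hy1n
        by_cases hx2n : Pi2 x = none
        · have hxnM2 : ff 1 2 h12 x ∉ M (vv 2) := by
            rw [hffM2 1 2 h12 x]
            simp [hx2n]
          have hmm : m ∈ M (vv 1) ∩ M (vv 2) := by
            rw [hY12]
            refine Finset.mem_inter.mpr ⟨?_, ?_⟩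
            · rw [← hym]; exact hyM0
            · rw [← hym]; exact hyM1
          apply hxnM2
          rw [hxm]
          exact (Finset.mem_inter.mp hmm).2
        · have hxf : ff 1 2 h12 x = ff 0 2 h02 x := G2 1 0 2 h12 h02 x hx2n
          have hyf : ff 0 1 h01 y = ff 0 2 h02 y := G1 0 1 2 h01 h02 y hy1n
          have heq : ff 0 2 h02 x = ff 0 2 h02 y := by rw [← hxf, ← hyf, hxm, hym]
          have hxy := hffinj 0 2 h02 heq
          exact hx1 (by rw [hxy, hy1])
      · -- σset = ∅ : Pi2 x ≠ none
        have hx2n : Pi2 x ≠ none := by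
          intro hn
          have hmem' : x ∈ σset := by
            rw [hσdef, Finset.mem_filter]
            exact ⟨Finset.mem_univ _, hn, hxnej⟩
          rw [hσe] at hmem'
          exact absurd hmem' (Finset.notMem_empty _)
        have hxf : ff 1 2 h12 x = ff 0 2 h02 x := G2 1 0 2 h12 h02 x hx2n
        have hxM2 : ff 1 2 h12 x ∈ M (vv 2) := (hffM2 1 2 h12 x).mpr hx2n
        by_cases hy1n : Pi1 y = none
        · have hynM0 : ff 0 1 h01 y ∉ M (vv 0) := by
            rw [hffM1 0 1 h01 y]
            simp [hy1n]
          have hmm : m ∈ M (vv 0) ∩ M (vv 1) := by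
            rw [← hY12]
            refine Finset.mem_inter.mpr ⟨?_, ?_⟩
            · rw [← hxm]; exact hxM1
            · rw [← hxm]; exact hxM2
          apply hynM0
          rw [hym]
          exact (Finset.mem_inter.mp hmm).1
        · have hyf : ff 0 1 h01 y = ff 0 2 h02 y := G1 0 1 2 h01 h02 y hy1n
          have heq : ff 0 2 h02 x = ff 0 2 h02 y := by rw [← hxf, ← hyf, hxm, hym]
          have hxy := hffinj 0 2 h02 heq
          exact hx1 (by rw [hxy, hy1])
    -- cardinalities
    have h4 : (Finset.univ : Finset (Σ i, Fin (s i))).card = S := by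
      rw [Finset.card_univ, sigma_card]
    have h1 : (Finset.univ.filter fun x : (Σ i, Fin (s i)) => x.1 = XJ.1).card = s XJ.1 :=
      slot_card s XJ.1
    have h2 : (Finset.univ.filter fun x : (Σ i, Fin (s i)) => ¬ x.1 = XJ.1).card
        = S - s XJ.1 := by
      have h3 := Finset.card_filter_add_card_filter_not
        (s := (Finset.univ : Finset (Σ i, Fin (s i)))) (p := fun x => x.1 = XJ.1)
      omega
    have hcardAc : Ac.card = S - s XJ.1 - 1 := by
      have hXKmem : XK ∈ Finset.univ.filter fun x : (Σ i, Fin (s i)) => ¬ x.1 = XJ.1 := by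
        rw [Finset.mem_filter]
        exact ⟨Finset.mem_univ _, fun h => hsb h.symm⟩
      rw [hAcdef, Finset.card_erase_of_mem hXKmem, h2]
    have hcardBc : Bc.card = s XJ.1 - 1 := by
      have hXJmem : XJ ∈ Finset.univ.filter fun x : (Σ i, Fin (s i)) => x.1 = XJ.1 := by
        rw [Finset.mem_filter]
        exact ⟨Finset.mem_univ _, rfl⟩
      rw [hBcdef, Finset.card_erase_of_mem hXJmem, h1]
    have hsub : Ac.image (ff 1 2 h12) ∪ Bc.image (ff 0 1 h01) ⊆ H.neighborFinset (vv 1) := by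
      intro m hm
      rcases Finset.mem_union.mp hm with hm | hm
      · obtain ⟨x, hxAc, rfl⟩ := Finset.mem_image.mp hm
        obtain ⟨hx1, hx2⟩ := hAcmem x hxAc
        rw [SimpleGraph.mem_neighborFinset]
        exact hAc x hx1 hx2
      · obtain ⟨y, hyBc, rfl⟩ := Finset.mem_image.mp hm
        obtain ⟨hy1, hy2⟩ := hBcmem y hyBc
        rw [SimpleGraph.mem_neighborFinset]
        exact hBc y hy1 hy2
    have hcardunion : (Ac.image (ff 1 2 h12) ∪ Bc.image (ff 0 1 h01)).card
        = Ac.card + Bc.card := by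
      rw [Finset.card_union_of_disjoint hdisj,
        Finset.card_image_of_injective _ (hffinj 1 2 h12),
        Finset.card_image_of_injective _ (hffinj 0 1 h01)]
    have hdegv1 := hdeg (vv 1) (hvvD 1)
    have hle := Finset.card_le_card hsub
    have hsum2 : s XJ.1 + s XK.1 ≤ S := by
      have hsb2 := Finset.sum_le_sum_of_subset (Finset.subset_univ ({XJ.1, XK.1} : Finset (Fin r)))
        (f := s)
      rwa [Finset.sum_pair hsb] at hsb2
    have hs1 := hs XJ.1
    have hs2 := hs XK.1
    omega
  · -- CASE B : construct a copy of F inside H, contradiction with F-freeness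
    push_neg at hcase
    obtain ⟨hρne, hσne⟩ := hcase
    obtain ⟨yR, hyRmem⟩ := hρne
    obtain ⟨yS, hySmem⟩ := hσne
    obtain ⟨hyRslot, hyRXJ⟩ := hρslot yR hyRmem
    obtain ⟨hySslot, hySXK⟩ := hσslot yS hySmem
    have hyRpi : Pi1 yR = none := by
      rw [hρdef, Finset.mem_filter] at hyRmem; exact hyRmem.2.1
    have hyRXK : yR ≠ XK := by
      rw [hρdef, Finset.mem_filter] at hyRmem; exact hyRmem.2.2
    have hySpi : Pi2 yS = none := by
      rw [hσdef, Finset.mem_filter] at hySmem; exact hySmem.2.1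
    have hySXJ : yS ≠ XJ := by
      rw [hσdef, Finset.mem_filter] at hySmem; exact hySmem.2.2
    have hwadj3 : H.Adj (vv 3) (ff 0 3 h03 yR) := by
      have hslot' : XK.1 ≠ yR.1 := by rw [hyRslot]; exact fun h => hsb h.symm
      have := hffadj 0 3 h03 XK yR hslot' (Or.inl fun h => hXJK h.symm) (Or.inr hyRXJ)
      rwa [hffXK 0 3 h03] at this
    have hwM3 : ff 0 3 h03 yR ∈ M (vv 3) := hMadj _ _ hwadj3
    have hwM0 : ff 0 3 h03 yR ∉ M (vv 0) := by
      rw [hffM1 0 3 h03 yR]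
      simp [hyRpi]
    have hwM1 : ff 0 3 h03 yR ∉ M (vv 1) := by
      intro hmem'
      apply hwM0
      have hmm : ff 0 3 h03 yR ∈ M (vv 1) ∩ M (vv 3) := Finset.mem_inter.mpr ⟨hmem', hwM3⟩
      rw [hY13] at hmm
      exact (Finset.mem_inter.mp hmm).1
    have hwM2 : ff 0 3 h03 yR ∉ M (vv 2) := by
      intro hmem'
      apply hwM0
      have hmm : ff 0 3 h03 yR ∈ M (vv 2) ∩ M (vv 3) := Finset.mem_inter.mpr ⟨hmem', hwM3⟩
      rw [hY23] at hmm
      exact (Finset.mem_inter.mp hmm).1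
    have hzadj1 : H.Adj (vv 1) (ff 1 2 h12 yS) := by
      have hslot' : XJ.1 ≠ yS.1 := by rw [hySslot]; exact hsb
      have := hffadj 1 2 h12 XJ yS hslot' (Or.inr hySXK) (Or.inl hXJK)
      rwa [hffXJ 1 2 h12] at this
    have hzM1 : ff 1 2 h12 yS ∈ M (vv 1) := hMadj _ _ hzadj1
    have hzM2 : ff 1 2 h12 yS ∉ M (vv 2) := by
      rw [hffM2 1 2 h12 yS]
      simp [hySpi]
    have hzM0 : ff 1 2 h12 yS ∉ M (vv 0) := by
      intro hmem'
      apply hzM2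
      have hmm : ff 1 2 h12 yS ∈ M (vv 0) ∩ M (vv 1) := Finset.mem_inter.mpr ⟨hmem', hzM1⟩
      rw [← hY12] at hmm
      exact (Finset.mem_inter.mp hmm).2
    have hzM3 : ff 1 2 h12 yS ∉ M (vv 3) := by
      intro hmem'
      apply hzM2
      have hmm : ff 1 2 h12 yS ∈ M (vv 1) ∩ M (vv 3) := Finset.mem_inter.mpr ⟨hzM1, hmem'⟩
      rw [hY13, ← hY12] at hmm
      exact (Finset.mem_inter.mp hmm).2
    have hwz : ff 0 3 h03 yR ≠ ff 1 2 h12 yS := by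
      intro h
      apply hzM3
      rw [← h]
      exact hwM3
    have him : ∀ x : (Σ i, Fin (s i)), x ≠ XJ → x ≠ XK →
        ff 0 2 h02 x ∈ M (vv 0) ∪ M (vv 2) := by
      intro x hxj hxk
      by_cases hx1 : x.1 = XJ.1
      · have hslot' : XK.1 ≠ x.1 := by rw [hx1]; exact fun h => hsb h.symm
        have := hffadj 0 2 h02 XK x hslot' (Or.inl fun h => hXJK h.symm) (Or.inr hxj)
        rw [hffXK 0 2 h02] at this
        exact Finset.mem_union.mpr (Or.inr (hMadj _ _ this))
      · have := hffadj 0 2 h02 XJ x (fun h => hx1 h.symm) (Or.inr hxk) (Or.inl hXJK)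
        rw [hffXJ 0 2 h02] at this
        exact Finset.mem_union.mpr (Or.inl (hMadj _ _ this))
    have hwMU : ff 0 3 h03 yR ∉ M (vv 0) ∪ M (vv 2) := by
      rw [Finset.mem_union]
      rintro (h | h)
      exacts [hwM0 h, hwM2 h]
    have hzMU : ff 1 2 h12 yS ∉ M (vv 0) ∪ M (vv 2) := by
      rw [Finset.mem_union]
      rintro (h | h)
      exacts [hzM0 h, hzM2 h]
    set g : (Σ i, Fin (s i)) → V :=
      Function.update (Function.update (ff 0 2 h02) XJ (ff 0 3 h03 yR)) XK (ff 1 2 h12 yS)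
      with hgdef
    have hgXJ : g XJ = ff 0 3 h03 yR := by
      rw [hgdef, Function.update_of_ne hXJK, Function.update_self]
    have hgXK : g XK = ff 1 2 h12 yS := by
      rw [hgdef, Function.update_self]
    have hgother : ∀ x, x ≠ XJ → x ≠ XK → g x = ff 0 2 h02 x := by
      intro x hxj hxk
      rw [hgdef, Function.update_of_ne hxk, Function.update_of_ne hxj]
    have hginj : Function.Injective g := by
      intro a bb hab
      by_cases haj : a = XJ
      · by_cases hbj : bb = XJ
        · rw [haj, hbj]
        · by_cases hbk : bb = XK
          · subst haj; subst hbk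
            rw [hgXJ, hgXK] at hab
            exact absurd hab hwz
          · subst haj
            rw [hgXJ, hgother bb hbj hbk] at hab
            exact absurd (hab ▸ him bb hbj hbk) hwMU
      · by_cases hak : a = XK
        · by_cases hbj : bb = XJ
          · subst hak; subst hbj
            rw [hgXK, hgXJ] at hab
            exact absurd hab.symm hwz
          · by_cases hbk : bb = XK
            · rw [hak, hbk]
            · subst hak
              rw [hgXK, hgother bb hbj hbk] at hab
              exact absurd (hab ▸ him bb hbj hbk) hzMU
        · by_cases hbj : bb = XJ
          · subst hbj
            rw [hgother a haj hak, hgXJ] at hab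
            exact absurd (hab ▸ him a haj hak) hwMU
          · by_cases hbk : bb = XK
            · subst hbk
              rw [hgother a haj hak, hgXK] at hab
              exact absurd (hab ▸ him a haj hak) hzMU
            · rw [hgother a haj hak, hgother bb hbj hbk] at hab
              exact hffinj 0 2 h02 hab
    have hPi1yS := (hffM1 1 2 h12 yS).mp hzM1
    have hPi2yR := (hffM2 0 3 h03 yR).mp hwM3
    have hwf13 : ff 0 3 h03 yR = ff 1 3 h13 yR := G2 0 1 3 h03 h13 yR hPi2yR
    have hzf13 : ff 1 2 h12 yS = ff 1 3 h13 yS := G1 1 2 3 h12 h13 yS hPi1yS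
    have adjJK : H.Adj (g XJ) (g XK) := by
      rw [hgXJ, hgXK, hwf13, hzf13]
      exact hffadj 1 3 h13 yR yS (by rw [hyRslot, hySslot]; exact hsb)
        (Or.inl hyRXJ) (Or.inl hyRXK)
    have adjJo : ∀ bb : (Σ i, Fin (s i)), bb ≠ XJ → bb ≠ XK → XJ.1 ≠ bb.1 →
        H.Adj (g XJ) (g bb) := by
      intro bb hbj hbk hbs
      have hbM0 : ff 0 2 h02 bb ∈ M (vv 0) := by
        have := hffadj 0 2 h02 XJ bb hbs (Or.inr hbk) (Or.inl hXJK)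
        rw [hffXJ 0 2 h02] at this
        exact hMadj _ _ this
      have hbpi1 := (hffM1 0 2 h02 bb).mp hbM0
      have hbf : ff 0 2 h02 bb = ff 0 3 h03 bb := G1 0 2 3 h02 h03 bb hbpi1
      rw [hgXJ, hgother bb hbj hbk, hbf]
      exact hffadj 0 3 h03 yR bb (by rw [hyRslot]; exact hbs)
        (Or.inl hyRXJ) (Or.inl hyRXK)
    have adjKo : ∀ bb : (Σ i, Fin (s i)), bb ≠ XJ → bb ≠ XK → XK.1 ≠ bb.1 →
        H.Adj (g XK) (g bb) := by
      intro bb hbj hbk hbs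
      have hbM2 : ff 0 2 h02 bb ∈ M (vv 2) := by
        have := hffadj 0 2 h02 XK bb hbs (Or.inl fun h => hXJK h.symm) (Or.inr hbj)
        rw [hffXK 0 2 h02] at this
        exact hMadj _ _ this
      have hbpi2 := (hffM2 0 2 h02 bb).mp hbM2
      have hbf : ff 0 2 h02 bb = ff 1 2 h12 bb := G2 0 1 2 h02 h12 bb hbpi2
      rw [hgXK, hgother bb hbj hbk, hbf]
      exact hffadj 1 2 h12 yS bb (by rw [hySslot]; exact hbs)
        (Or.inl hySXJ) (Or.inl hySXK)
    have hgadj : ∀ a bb : (Σ i, Fin (s i)), a.1 ≠ bb.1 → H.Adj (g a) (g bb) := by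
      intro a bb hab
      by_cases haj : a = XJ
      · subst haj
        by_cases hbk : bb = XK
        · subst hbk; exact adjJK
        · exact adjJo bb (fun h => hab (by rw [h])) hbk hab
      · by_cases hak : a = XK
        · subst hak
          by_cases hbj : bb = XJ
          · subst hbj; exact adjJK.symm
          · exact adjKo bb hbj (fun h => hab (by rw [h])) hab
        · by_cases hbj : bb = XJ
          · subst hbj
            exact (adjJo a haj hak (fun h => hab h.symm)).symm
          · by_cases hbk : bb = XK
            · subst hbk
              exact (adjKo a haj hak (fun h => hab h.symm)).symm
            · rw [hgother a haj hak, hgother bb hbj hbk]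
              exact hffadj 0 2 h02 a bb hab (Or.inl haj) (Or.inl hak)
    apply hsat.1
    refine ⟨⟨g, ?_⟩, hginj⟩
    intro a bb hab
    exact hgadj a bb (by simpa using hab)
end

section
/- Let k ≥ 5 and let G be a C_k-saturated graph with at least 3 vertices. Let x be a vertex of G of degree one with unique neighbor y. Then every vertex v ∈ N_G[y] \ {x} satisfies deg_G(v) ≥ 3. In particular, two distinct degree-one vertices of G have distinct neighbors. -/
open SimpleGraph
open scoped Fin.NatCast Fin.IntCast Fin.CommRing

lemma finCastNeZero {n m : ℕ} (h0 : 0 < m) (h2 : m < n + 2) :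
    ((m : ℕ) : Fin (n + 2)) ≠ 0 := by
  have := Fin.val_cast_of_lt (n := n+2) (a := m) h2
  intro hc; rw [hc] at this; simp at this; omega

section CycleAux

variable {V : Type} {G' : SimpleGraph V} {n : ℕ}

lemma cyc_adj_succ (i : Fin (n + 2)) : (cycleGraph (n + 2)).Adj i (i + 1) := by
  rw [cycleGraph_adj]; right; ring

lemma cyc_adj_pred (i : Fin (n + 2)) : (cycleGraph (n + 2)).Adj i (i - 1) := by
  rw [cycleGraph_adj]; left; ring

lemma cyc_nbrs (hn : 3 ≤ n) (f : cycleGraph (n + 2) →g G') (hf : Function.Injective f)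
    (i : Fin (n + 2)) :
    G'.Adj (f i) (f (i + 1)) ∧ G'.Adj (f i) (f (i - 1)) ∧ f (i + 1) ≠ f (i - 1) := by
  refine ⟨f.map_adj (cyc_adj_succ i), f.map_adj (cyc_adj_pred i), fun h => ?_⟩
  have h2 := hf h
  exact finCastNeZero (n := n) (m := 2) (by omega) (by omega)
    (by push_cast; linear_combination h2)

/-- rotation homomorphism of the cycle graph -/
def cycRot (n : ℕ) (c : Fin (n + 2)) : cycleGraph (n + 2) →g cycleGraph (n + 2) where
  toFun := fun i => i + c
  map_rel' := by
    intro a b h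
    rw [cycleGraph_adj] at h ⊢
    rcases h with h | h
    · left; rw [← h]; ring
    · right; rw [← h]; ring

/-- reflection homomorphism of the cycle graph -/
def cycRefl (n : ℕ) : cycleGraph (n + 2) →g cycleGraph (n + 2) where
  toFun := fun i => -i
  map_rel' := by
    intro a b h
    rw [cycleGraph_adj] at h ⊢
    rcases h with h | h
    · right; rw [← h]; ring
    · left; rw [← h]; ring

lemma normalize_copy (f : cycleGraph (n + 2) →g G') (hf : Function.Injective f)
    (i0 : Fin (n + 2)) {a b c : V} (ha : f i0 = a)
    (hbc : (f (i0 + 1) = b ∧ f (i0 - 1) = c) ∨ (f (i0 + 1) = c ∧ f (i0 - 1) = b)) :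
    ∃ g : cycleGraph (n + 2) →g G', Function.Injective g ∧
      g 0 = a ∧ g 1 = b ∧ g (-1) = c := by
  have hrotinj : ∀ c : Fin (n+2), Function.Injective (fun i : Fin (n+2) => i + c) :=
    fun c => add_left_injective c
  have hreflinj : Function.Injective (fun i : Fin (n+2) => -i) := neg_injective
  rcases hbc with ⟨hb, hc⟩ | ⟨hc, hb⟩
  · refine ⟨f.comp (cycRot n i0), hf.comp (hrotinj i0), ?_, ?_, ?_⟩
    · show f (0 + i0) = a; rw [zero_add]; exact ha
    · show f (1 + i0) = b; rw [show (1 : Fin (n+2)) + i0 = i0 + 1 by ring]; exact hb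
    · show f (-1 + i0) = c; rw [show -1 + i0 = i0 - 1 by ring]; exact hc
  · refine ⟨(f.comp (cycRot n i0)).comp (cycRefl n), (hf.comp (hrotinj i0)).comp hreflinj,
      ?_, ?_, ?_⟩
    · show f (-0 + i0) = a; rw [neg_zero, zero_add]; exact ha
    · show f (-1 + i0) = b; rw [show -1 + i0 = i0 - 1 by ring]; exact hb
    · show f (-(-1) + i0) = c; rw [show -(-1) + i0 = i0 + 1 by ring]; exact hc

end CycleAux

section SupAux

variable {V : Type} {G : SimpleGraph V}

lemma adj_sup_cases {a b w z : V} (h : (G ⊔ fromEdgeSet {s(a, b)}).Adj w z) :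
    G.Adj w z ∨ (w = a ∧ z = b) ∨ (w = b ∧ z = a) := by
  rw [sup_adj, fromEdgeSet_adj] at h
  rcases h with h | ⟨hs, _⟩
  · exact Or.inl h
  · simp only [Set.mem_singleton_iff, Sym2.eq, Sym2.rel_iff', Prod.mk.injEq,
      Prod.swap_prod_mk] at hs
    tauto

lemma uses_new_edge {n : ℕ} {a b : V}
    (hfree : ¬ HasCopy (cycleGraph (n + 2)) G)
    (f : cycleGraph (n + 2) →g (G ⊔ fromEdgeSet {s(a, b)}))
    (hf : Function.Injective f) :
    ∃ i : Fin (n + 2), f i = a ∧ (f (i + 1) = b ∨ f (i - 1) = b) := by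
  by_contra hcon
  push_neg at hcon
  apply hfree
  have hG : ∀ u v : Fin (n + 2), (cycleGraph (n + 2)).Adj u v → G.Adj (f u) (f v) := by
    intro u v huv
    rcases adj_sup_cases (f.map_adj huv) with h | ⟨h1, h2⟩ | ⟨h1, h2⟩
    · exact h
    · exfalso
      rw [cycleGraph_adj] at huv
      rcases huv with h3 | h3
      · exact (hcon u h1).2 (by rw [show u - 1 = v by rw [← h3]; ring]; exact h2)
      · exact (hcon u h1).1 (by rw [show u + 1 = v by rw [← h3]; ring]; exact h2)
    · exfalso
      rw [cycleGraph_adj] at huv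
      rcases huv with h3 | h3
      · exact (hcon v h2).1 (by rw [show v + 1 = u by rw [← h3]; ring]; exact h1)
      · exact (hcon v h2).2 (by rw [show v - 1 = u by rw [← h3]; ring]; exact h1)
  exact ⟨⟨f, @hG⟩, hf⟩

end SupAux

lemma smallSetCases {V : Type} [Fintype V] (S : Set V) (a : V) (ha : a ∈ S)
    (h : S.ncard ≤ 2) : S = {a} ∨ ∃ b, b ≠ a ∧ S = {a, b} := by
  by_cases hsub : S ⊆ {a}
  · left; exact Set.Subset.antisymm hsub (by simpa using ha)
  · right
    obtain ⟨b, hbS, hba⟩ : ∃ b ∈ S, b ≠ a := by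
      by_contra hc; push_neg at hc
      exact hsub (fun z hz => hc z hz)
    refine ⟨b, hba, ?_⟩
    have hsub2 : ({a, b} : Set V) ⊆ S := by
      intro z hz; rcases hz with rfl | rfl
      · exact ha
      · exact hbS
    have hcard : ({a, b} : Set V).ncard = 2 := Set.ncard_pair (Ne.symm hba)
    exact (Set.eq_of_subset_of_ncard_le hsub2 (by omega) (Set.toFinite S)).symm

lemma pendant_copy {V : Type} {G : SimpleGraph V} {n : ℕ} (hn : 3 ≤ n)
    {x y w : V} (hx : G.neighborSet x = {y}) (hwy : w ≠ y) (hwx : w ≠ x)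
    (hsat : IsSat (cycleGraph (n + 2)) G) :
    ∃ g : cycleGraph (n + 2) →g (G ⊔ fromEdgeSet {s(x, w)}),
      Function.Injective g ∧ g 0 = x ∧ g 1 = w ∧ g (-1) = y := by
  have hnadj : ¬ G.Adj x w := fun h => hwy (by
    have : w ∈ G.neighborSet x := h
    rw [hx] at this; exact this)
  obtain ⟨f, hf⟩ := hsat.2 x w (Ne.symm hwx) hnadj
  obtain ⟨i, hix, hw⟩ := uses_new_edge hsat.1 f hf
  have hnbx : ∀ z : Fin (n + 2), (G ⊔ fromEdgeSet {s(x, w)}).Adj x (f z) →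
      f z ≠ w → f z = y := by
    intro z hadj hne
    rcases adj_sup_cases hadj with h | ⟨h1, h2⟩ | ⟨h1, h2⟩
    · have : f z ∈ G.neighborSet x := h
      rw [hx] at this; exact this
    · exact absurd h2 hne
    · exact absurd h1.symm hwx
  obtain ⟨ha1, ha2, hne⟩ := cyc_nbrs hn f hf i
  rw [hix] at ha1 ha2
  rcases hw with hw | hw
  · have hc : f (i - 1) = y := hnbx _ ha2 (fun h => hne (hw.trans h.symm))
    exact normalize_copy f hf i hix (Or.inl ⟨hw, hc⟩)
  · have hc : f (i + 1) = y := hnbx _ ha1 (fun h => hne (h.trans hw.symm))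
    exact normalize_copy f hf i hix (Or.inr ⟨hc, hw⟩)

lemma build_cycle {V : Type} {G : SimpleGraph V} {n : ℕ} (hn : 3 ≤ n)
    {x y v u : V} (hx : G.neighborSet x = {y}) (hv : G.neighborSet v = {y, u})
    (hvx : v ≠ x) (huy : u ≠ y)
    (g : cycleGraph (n + 2) →g (G ⊔ fromEdgeSet {s(x, u)})) (hg : Function.Injective g)
    (h0 : g 0 = x) (h1 : g 1 = u) (hm : g (-1) = y) :
    HasCopy (cycleGraph (n + 2)) G := by
  classical
  have hvy_adj : G.Adj v y := by
    rw [← SimpleGraph.mem_neighborSet, hv]; left; rfl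
  have hvu_adj : G.Adj v u := by
    rw [← SimpleGraph.mem_neighborSet, hv]; right; rfl
  have hvy : v ≠ y := hvy_adj.ne
  have hvu : v ≠ u := hvu_adj.ne
  have hux : u ≠ x := by
    intro h
    subst h
    have : v ∈ G.neighborSet u := hvu_adj.symm
    rw [hx] at this
    exact hvy this
  set h : Fin (n + 2) → V := fun i => if i = 0 then v else g i with hh
  have hval0 : h 0 = v := if_pos rfl
  have hvalne : ∀ i, i ≠ 0 → h i = g i := fun i hi => if_neg hi
  have hnotx : ∀ i : Fin (n + 2), i ≠ 0 → g i ≠ x :=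
    fun i hi hgi => hi (hg (hgi.trans h0.symm))
  -- classify neighbors of v in the augmented graph
  have keyv : ∀ z : Fin (n + 2), (G ⊔ fromEdgeSet {s(x, u)}).Adj v (g z) →
      g z = y ∨ g z = u := by
    intro z hadj
    rcases adj_sup_cases hadj with hA | ⟨hA1, hA2⟩ | ⟨hA1, hA2⟩
    · have : g z ∈ G.neighborSet v := hA
      rw [hv] at this
      exact this
    · exact absurd hA1 hvx
    · exact absurd hA1 hvu
  have hvcase : ∀ j : Fin (n + 2), j ≠ 0 → g j ≠ v := by
    intro j hj hgj
    obtain ⟨ha1, ha2, hne⟩ := cyc_nbrs hn g hg j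
    rw [hgj] at ha1 ha2
    rcases keyv _ ha1 with e1 | e1 <;> rcases keyv _ ha2 with e2 | e2
    · exact hne (e1.trans e2.symm)
    · -- g (j+1) = y = g (-1), g (j-1) = u = g 1
      have eA := hg (e1.trans hm.symm)
      have eB := hg (e2.trans h1.symm)
      exact finCastNeZero (n := n) (m := 4) (by omega) (by omega)
        (by push_cast; linear_combination eA - eB)
    · -- g (j+1) = u = g 1 → j = 0
      have eA := hg (e1.trans h1.symm)
      exact hj (by linear_combination eA)
    · exact hne (e1.trans e2.symm)
  -- map on edges
  have hmap0 : ∀ j : Fin (n + 2), j ≠ 0 → (cycleGraph (n + 2)).Adj 0 j →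
      G.Adj v (g j) := by
    intro j hj hadj
    rw [cycleGraph_adj] at hadj
    rcases hadj with h3 | h3
    · have : j = -1 := by linear_combination -h3
      rw [this, hm]
      exact hvy_adj
    · have : j = 1 := by linear_combination h3
      rw [this, h1]
      exact hvu_adj
  have hmap : ∀ a b : Fin (n + 2), (cycleGraph (n + 2)).Adj a b → G.Adj (h a) (h b) := by
    intro a b hab
    by_cases ha : a = 0 <;> by_cases hb : b = 0
    · exact absurd (ha.trans hb.symm) hab.ne
    · subst ha
      rw [hval0, hvalne b hb]
      exact hmap0 b hb hab
    · subst hb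
      rw [hval0, hvalne a ha]
      exact (hmap0 a ha hab.symm).symm
    · rw [hvalne a ha, hvalne b hb]
      rcases adj_sup_cases (g.map_adj hab) with hA | ⟨hA1, hA2⟩ | ⟨hA1, hA2⟩
      · exact hA
      · exact absurd hA1 (hnotx a ha)
      · exact absurd hA2 (hnotx b hb)
  have hinj : Function.Injective h := by
    intro a b hab
    by_cases ha : a = 0 <;> by_cases hb : b = 0
    · exact ha.trans hb.symm
    · exfalso
      rw [ha] at hab
      rw [hval0, hvalne b hb] at hab
      exact hvcase b hb hab.symm
    · exfalso
      rw [hb] at hab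
      rw [hval0, hvalne a ha] at hab
      exact hvcase a ha hab
    · rw [hvalne a ha, hvalne b hb] at hab
      exact hg hab
  exact ⟨⟨h, fun {a b} hab => hmap a b hab⟩, hinj⟩

theorem neighbor_of_pendant_has_degree_ge_three
    (k : ℕ) (hk : 5 ≤ k) (V : Type) [Fintype V] (G : SimpleGraph V)
    (hV : 3 ≤ Fintype.card V) (hsat : IsSat (cycleGraph k) G)
    (x y : V) (hx : G.neighborSet x = {y}) :
    (∀ v ∈ insert y (G.neighborSet y), v ≠ x → 3 ≤ (G.neighborSet v).ncard) ∧
    (∀ x' y' : V, x' ≠ x → G.neighborSet x' = {y'} → y' ≠ y) := by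
  classical
  obtain ⟨n, rfl⟩ : ∃ n, k = n + 2 := ⟨k - 2, by omega⟩
  have hn : 3 ≤ n := by omega
  have hxy : G.Adj x y := by rw [← SimpleGraph.mem_neighborSet, hx]; rfl
  have hxny : x ≠ y := hxy.ne
  -- the main claim, for neighbors of y
  have key : ∀ v, G.Adj y v → v ≠ x → 3 ≤ (G.neighborSet v).ncard := by
    intro v hyv hvx
    by_contra hcon
    push_neg at hcon
    have hyv' : y ∈ G.neighborSet v := hyv.symm
    have hvy : v ≠ y := hyv.ne'
    rcases smallSetCases _ y hyv' (by omega) with hN | ⟨u, huy, hN⟩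
    · -- N(v) = {y}
      obtain ⟨g, hg, h0, h1, hm⟩ := pendant_copy hn hx hvy hvx hsat
      obtain ⟨ha1, _, _⟩ := cyc_nbrs hn g hg 1
      rw [h1] at ha1
      have h2y : g (1 + 1) = y := by
        rcases adj_sup_cases ha1 with h | ⟨hh1, hh2⟩ | ⟨hh1, hh2⟩
        · have : g (1 + 1) ∈ G.neighborSet v := h
          rw [hN] at this; exact this
        · exact absurd hh1 hvx
        · exfalso
          have := hg (hh2.trans h0.symm)
          exact finCastNeZero (n := n) (m := 2) (by omega) (by omega)
            (by push_cast; linear_combination this)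
      have e := hg (h2y.trans hm.symm)
      exact finCastNeZero (n := n) (m := 3) (by omega) (by omega)
        (by push_cast; linear_combination e)
    · -- N(v) = {y, u}
      have hvu_adj : G.Adj v u := by
        rw [← SimpleGraph.mem_neighborSet, hN]; right; rfl
      have hux : u ≠ x := by
        intro h
        subst h
        have : v ∈ G.neighborSet u := hvu_adj.symm
        rw [hx] at this
        exact hvy this
      obtain ⟨g, hg, h0, h1, hm⟩ := pendant_copy hn hx huy hux hsat
      exact hsat.1 (build_cycle hn hx hN hvx huy g hg h0 h1 hm)
  -- degree of y itself
  have keyy : 3 ≤ (G.neighborSet y).ncard := by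
    by_contra hcon
    push_neg at hcon
    have hxy' : x ∈ G.neighborSet y := hxy.symm
    rcases smallSetCases _ x hxy' (by omega) with hN | ⟨w, hwx, hN⟩
    · -- N(y) = {x}
      obtain ⟨z, hzx, hzy⟩ : ∃ z : V, z ≠ x ∧ z ≠ y := by
        by_contra hc
        push_neg at hc
        have hsub : (Finset.univ : Finset V) ⊆ {x, y} := by
          intro z _
          rcases em (z = x) with h | h
          · simp [h]
          · simp [hc z h]
        have := Finset.card_le_card hsub
        have h2 : ({x, y} : Finset V).card ≤ 2 := Finset.card_insert_le x {y} |>.trans (by simp)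
        simp [Finset.card_univ] at this
        omega
      obtain ⟨g, hg, h0, h1, hm⟩ := pendant_copy hn hx hzy hzx hsat
      obtain ⟨_, ha2, _⟩ := cyc_nbrs hn g hg (-1)
      rw [hm] at ha2
      rcases adj_sup_cases ha2 with h | ⟨hh1, hh2⟩ | ⟨hh1, hh2⟩
      · have h3 : g (-1 - 1) ∈ G.neighborSet y := h
        rw [hN] at h3
        have e := hg (h3.trans h0.symm)
        exact finCastNeZero (n := n) (m := 2) (by omega) (by omega)
          (by push_cast; linear_combination -e)
      · exact absurd hh1 hxny.symm
      · exact absurd hh1 hzy.symm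
    · -- N(y) = {x, w}
      have hwadj : G.Adj y w := by
        rw [← SimpleGraph.mem_neighborSet, hN]; right; rfl
      have hwy : w ≠ y := hwadj.ne'
      obtain ⟨g, hg, h0, h1, hm⟩ := pendant_copy hn hx hwy hwx hsat
      obtain ⟨_, ha2, _⟩ := cyc_nbrs hn g hg (-1)
      rw [hm] at ha2
      rcases adj_sup_cases ha2 with h | ⟨hh1, hh2⟩ | ⟨hh1, hh2⟩
      · have h3 : g (-1 - 1) ∈ G.neighborSet y := h
        rw [hN] at h3
        rcases h3 with h3 | h3
        · have e := hg (h3.trans h0.symm)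
          exact finCastNeZero (n := n) (m := 2) (by omega) (by omega)
            (by push_cast; linear_combination -e)
        · have e := hg (h3.trans h1.symm)
          exact finCastNeZero (n := n) (m := 3) (by omega) (by omega)
            (by push_cast; linear_combination -e)
      · exact absurd hh1 hxny.symm
      · exact absurd hh1 hwy.symm
  constructor
  · intro v hv hvx
    rcases hv with rfl | hv
    · exact keyy
    · exact key v hv hvx
  · intro x' y' hx'x hx'N hy'y
    rw [hy'y] at hx'N
    have hady : G.Adj x' y := by
      rw [← SimpleGraph.mem_neighborSet, hx'N]; rfl
    have h3 := key x' hady.symm hx'x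
    rw [hx'N, Set.ncard_singleton] at h3
    omega
end

section
/- Let k ≥ 5 and let G be a C_k-saturated graph with at least 3 vertices. Let x and x' be two distinct degree-one vertices of G with N_G(x) = {y} and N_G(x') = {y'}. If y is adjacent to y', then deg_G(y) ≥ 4. -/
open SimpleGraph

/- ### Auxiliary lemmas -/

open Fin.CommRing

lemma natCast_ne_zero' (n c : ℕ) (h1 : 0 < c) (h2 : c < n + 5) : ((c : Fin (n+5))) ≠ 0 := by
  simp only [ne_eq, Fin.ext_iff, Fin.val_natCast, Fin.val_zero, Nat.mod_eq_of_lt h2]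
  omega

lemma cycle_adj (n : ℕ) (u v : Fin (n+5)) :
    (cycleGraph (n+5)).Adj u v ↔ v = u - 1 ∨ v = u + 1 := by
  rw [cycleGraph_adj']
  have h1 : (1 : Fin (n+5)).val = 1 := by simp
  rw [show ((u-v).val = 1 ↔ u - v = 1) by rw [Fin.ext_iff, h1],
      show ((v-u).val = 1 ↔ v - u = 1) by rw [Fin.ext_iff, h1],
      sub_eq_iff_eq_add, sub_eq_iff_eq_add]
  constructor
  · rintro (h | h)
    · left; rw [h]; ring
    · right; rw [h]; ring
  · rintro (h | h)
    · left; rw [h]; ring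
    · right; rw [h]; ring

lemma adj_succ (n : ℕ) (i : Fin (n+5)) : (cycleGraph (n+5)).Adj i (i+1) :=
  (cycle_adj n i (i+1)).mpr (Or.inr rfl)

lemma adj_pred (n : ℕ) (i : Fin (n+5)) : (cycleGraph (n+5)).Adj i (i-1) :=
  (cycle_adj n i (i-1)).mpr (Or.inl rfl)

lemma two_step (n : ℕ) (i : Fin (n+5)) : i + 1 ≠ i - 1 := fun h =>
  natCast_ne_zero' n 2 (by norm_num) (by omega) (by push_cast; linear_combination h)

lemma sup_edge_adj {V : Type*} (G : SimpleGraph V) (a b u v : V)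
    (h : (G ⊔ fromEdgeSet {s(a,b)}).Adj u v) :
    G.Adj u v ∨ (u = a ∧ v = b) ∨ (u = b ∧ v = a) := by
  rw [sup_adj, fromEdgeSet_adj, Set.mem_singleton_iff, Sym2.eq_iff] at h
  tauto

lemma forced_edge {α V : Type*} {F : SimpleGraph α} {G : SimpleGraph V}
    (hfree : ¬ HasCopy F G) {a b : V}
    (f : F →g (G ⊔ fromEdgeSet {s(a,b)})) (hinj : Function.Injective f) :
    ∃ i j, F.Adj i j ∧ f i = a ∧ f j = b := by
  by_contra hcon
  push_neg at hcon
  apply hfree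
  refine ⟨⟨(f : α → V), fun {i j} hij => ?_⟩, hinj⟩
  have h := f.map_adj hij
  rcases sup_edge_adj G a b (f i) (f j) h with h' | ⟨h1, h2⟩ | ⟨h1, h2⟩
  · exact h'
  · exact absurd h2 (hcon i j hij h1)
  · exact absurd h1 (hcon j i hij.symm h2)

lemma one_nbr (n : ℕ) {V : Type*} {H : SimpleGraph V}
    (f : cycleGraph (n+5) →g H) (hinj : Function.Injective f) (v p : V)
    (hnb : ∀ u, H.Adj v u → u = p) : ∀ m, f m ≠ v := by
  intro m hfm
  have a1 : H.Adj v (f (m+1)) := by rw [← hfm]; exact f.map_adj (adj_succ n m)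
  have a2 : H.Adj v (f (m-1)) := by rw [← hfm]; exact f.map_adj (adj_pred n m)
  exact two_step n m (hinj ((hnb _ a1).trans (hnb _ a2).symm))

lemma two_nbrs (n : ℕ) {V : Type*} {H : SimpleGraph V}
    (f : cycleGraph (n+5) →g H) (hinj : Function.Injective f) (i : Fin (n+5)) (p q : V)
    (hnb : ∀ u, H.Adj (f i) u → u = p ∨ u = q) :
    (f (i+1) = p ∧ f (i-1) = q) ∨ (f (i+1) = q ∧ f (i-1) = p) := by
  have hne : f (i+1) ≠ f (i-1) := fun h => two_step n i (hinj h)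
  rcases hnb _ (f.map_adj (adj_succ n i)) with h1 | h1 <;>
    rcases hnb _ (f.map_adj (adj_pred n i)) with h2 | h2
  · exact absurd (h1.trans h2.symm) hne
  · exact Or.inl ⟨h1, h2⟩
  · exact Or.inr ⟨h1, h2⟩
  · exact absurd (h1.trans h2.symm) hne

theorem adjacent_pendant_neighbors_degree_ge_four
    (k : ℕ) (hk : 5 ≤ k) (V : Type) [Fintype V] (G : SimpleGraph V)
    (hV : 3 ≤ Fintype.card V) (hsat : IsSat (cycleGraph k) G)
    (x x' y y' : V) (hxx : x ≠ x')
    (hx : G.neighborSet x = {y}) (hx' : G.neighborSet x' = {y'})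
    (hadj : G.Adj y y') :
    4 ≤ (G.neighborSet y).ncard := by
  obtain ⟨n, rfl⟩ : ∃ n, k = n + 5 := ⟨k - 5, by omega⟩
  classical
  have hnx : ∀ u, G.Adj x u → u = y := fun u hu => by
    have : u ∈ G.neighborSet x := hu
    rwa [hx, Set.mem_singleton_iff] at this
  have hnx' : ∀ u, G.Adj x' u → u = y' := fun u hu => by
    have : u ∈ G.neighborSet x' := hu
    rwa [hx', Set.mem_singleton_iff] at this
  have hxy : G.Adj x y := by
    have : y ∈ G.neighborSet x := by rw [hx]; rfl
    exact this
  have hx'y' : G.Adj x' y' := by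
    have : y' ∈ G.neighborSet x' := by rw [hx']; rfl
    exact this
  have hyy' : y ≠ y' := hadj.ne
  have hxney : x ≠ y := hxy.ne
  -- x ≠ y'
  have hxy'ne : x ≠ y' := by
    intro hE
    have hx'y : x' = y := hnx x' (by rw [hE]; exact hx'y'.symm)
    have hny : ∀ u, G.Adj y u → u = x := by
      intro u hu
      have h1 : u = y' := hnx' u (by rw [hx'y]; exact hu)
      rw [h1, ← hE]
    obtain ⟨z, hzx, hzy⟩ : ∃ z, z ≠ x ∧ z ≠ y := by
      by_contra hc
      push_neg at hc
      have hsub : (Finset.univ : Finset V) ⊆ ({x, y} : Finset V) := by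
        intro v _
        rcases eq_or_ne v x with h | h
        · simp [h]
        · simp [hc v h]
      have h1 := Finset.card_le_card hsub
      have h2 : ({x, y} : Finset V).card ≤ 2 :=
        (Finset.card_insert_le _ _).trans (by simp)
      rw [Finset.card_univ] at h1
      omega
    have hnadj : ¬ G.Adj x z := fun h => hzy (hnx z h)
    obtain ⟨f, hinj⟩ := hsat.2 x z (Ne.symm hzx) hnadj
    obtain ⟨i, j, hij, hfi, hfj⟩ := forced_edge hsat.1 f hinj
    have hnbx : ∀ u, (G ⊔ fromEdgeSet {s(x,z)}).Adj (f i) u → u = y ∨ u = z := by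
      rw [hfi]
      intro u hu
      rcases sup_edge_adj G x z x u hu with h | ⟨_, h⟩ | ⟨h1, _⟩
      · exact Or.inl (hnx u h)
      · exact Or.inr h
      · exact absurd h1.symm hzx
    obtain ⟨m, hfm⟩ : ∃ m, f m = y := by
      rcases two_nbrs n f hinj i y z hnbx with ⟨h1, _⟩ | ⟨_, h2⟩
      · exact ⟨i+1, h1⟩
      · exact ⟨i-1, h2⟩
    have hnby : ∀ u, (G ⊔ fromEdgeSet {s(x,z)}).Adj y u → u = x := by
      intro u hu
      rcases sup_edge_adj G x z y u hu with h | ⟨h1, _⟩ | ⟨h1, _⟩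
      · exact hny u h
      · exact absurd h1 hxney.symm
      · exact absurd h1.symm hzy
    exact one_nbr n f hinj y x hnby m hfm
  have hyx' : y ≠ x' := by
    intro hE
    exact hxy'ne (hnx' x (by rw [← hE]; exact hxy.symm))
  -- step 2: exists a third neighbor z of y
  obtain ⟨z, hyz, hzx, hzy'⟩ : ∃ z, G.Adj y z ∧ z ≠ x ∧ z ≠ y' := by
    by_contra hc
    push_neg at hc
    have hny2 : ∀ u, G.Adj y u → u = x ∨ u = y' := fun u hu => by
      rcases eq_or_ne u x with h | h
      · exact Or.inl h
      · exact Or.inr (hc u hu h)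
    have hnadj : ¬ G.Adj x y' := fun h => hyy' (hnx y' h).symm
    obtain ⟨f, hinj⟩ := hsat.2 x y' hxy'ne hnadj
    obtain ⟨i, j, hij, hfi, hfj⟩ := forced_edge hsat.1 f hinj
    have hnbx : ∀ u, (G ⊔ fromEdgeSet {s(x,y')}).Adj (f i) u → u = y ∨ u = y' := by
      rw [hfi]
      intro u hu
      rcases sup_edge_adj G x y' x u hu with h | ⟨_, h⟩ | ⟨h1, _⟩
      · exact Or.inl (hnx u h)
      · exact Or.inr h
      · exact absurd h1 hxy'ne
    have key : ∀ m m' : Fin (n+5),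
        ((m = i + 1 ∧ m' = i - 1) ∨ (m = i - 1 ∧ m' = i + 1)) →
        f m = y → f m' = y' → False := by
      intro m m' hmm hfm hfm'
      have hnby : ∀ u, (G ⊔ fromEdgeSet {s(x,y')}).Adj (f m) u → u = x ∨ u = y' := by
        rw [hfm]
        intro u hu
        rcases sup_edge_adj G x y' y u hu with h | ⟨h1, _⟩ | ⟨h1, _⟩
        · exact hny2 u h
        · exact absurd h1 hxney.symm
        · exact absurd h1 hyy'
      rcases two_nbrs n f hinj m x y' hnby with ⟨ha, hb⟩ | ⟨ha, hb⟩
      · have e1 : m + 1 = i := hinj (by rw [ha, hfi])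
        have e2 : m - 1 = m' := hinj (by rw [hb, hfm'])
        rcases hmm with ⟨rfl, rfl⟩ | ⟨rfl, rfl⟩
        · exact natCast_ne_zero' n 2 (by norm_num) (by omega)
            (by push_cast; linear_combination e1)
        · exact natCast_ne_zero' n 3 (by norm_num) (by omega)
            (by push_cast; linear_combination - e2)
      · have e1 : m + 1 = m' := hinj (by rw [ha, hfm'])
        have e2 : m - 1 = i := hinj (by rw [hb, hfi])
        rcases hmm with ⟨rfl, rfl⟩ | ⟨rfl, rfl⟩
        · exact natCast_ne_zero' n 3 (by norm_num) (by omega)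
            (by push_cast; linear_combination e1)
        · exact natCast_ne_zero' n 2 (by norm_num) (by omega)
            (by push_cast; linear_combination - e2)
    rcases two_nbrs n f hinj i y y' hnbx with ⟨h1, h2⟩ | ⟨h1, h2⟩
    · exact key (i+1) (i-1) (Or.inl ⟨rfl, rfl⟩) h1 h2
    · exact key (i-1) (i+1) (Or.inr ⟨rfl, rfl⟩) h2 h1
  -- main argument
  by_contra hcard
  push_neg at hcard
  have hsub : ({x, y', z} : Set V) ⊆ G.neighborSet y := by
    intro u hu
    rcases hu with h | h | h
    · rw [h]; exact hxy.symm
    · rw [h]; exact hadj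
    · rw [h]; exact hyz
  have hc3 : ({x, y', z} : Set V).ncard = 3 := by
    rw [Set.ncard_insert_of_notMem (by
        simp only [Set.mem_insert_iff, Set.mem_singleton_iff]
        push_neg
        exact ⟨hxy'ne, hzx.symm⟩),
      Set.ncard_insert_of_notMem (by
        simp only [Set.mem_singleton_iff]
        exact fun h => hzy' h.symm),
      Set.ncard_singleton]
  have hNy : G.neighborSet y = {x, y', z} :=
    (Set.eq_of_subset_of_ncard_le hsub (by omega)).symm
  have hny3 : ∀ u, G.Adj y u → u = x ∨ u = y' ∨ u = z := fun u hu => by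
    have : u ∈ G.neighborSet y := hu
    rw [hNy] at this
    simpa using this
  have hzx' : z ≠ x' := fun h =>
    hyy' (hnx' y (by rw [← h]; exact hyz.symm))
  have hnadj : ¬ G.Adj z x' := fun h => hzy' (hnx' z h.symm)
  obtain ⟨f, hinj⟩ := hsat.2 z x' hzx' hnadj
  obtain ⟨i0, j, hij0, hfi0, hfj⟩ := forced_edge hsat.1 f hinj
  have hxnr : ∀ m, f m ≠ x := by
    apply one_nbr n f hinj x y
    intro u hu
    rcases sup_edge_adj G z x' x u hu with h | ⟨h1, _⟩ | ⟨h1, _⟩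
    · exact hnx u h
    · exact absurd h1.symm hzx
    · exact absurd h1 hxx
  have hnbj : ∀ u, (G ⊔ fromEdgeSet {s(z,x')}).Adj x' u → u = y' ∨ u = z := by
    intro u hu
    rcases sup_edge_adj G z x' x' u hu with h | ⟨h1, _⟩ | ⟨_, h2⟩
    · exact Or.inl (hnx' u h)
    · exact absurd h1.symm hzx'
    · exact Or.inr h2
  by_cases hyr : ∃ m, f m = y
  · obtain ⟨m, hfm⟩ := hyr
    have hmj : m ≠ j := fun h => hyx' (by rw [← hfm, h, hfj])
    have hstep : ∀ w : Fin (n+5),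
        (G ⊔ fromEdgeSet {s(z,x')}).Adj (f m) (f w) → f w = y' ∨ f w = z := by
      intro w hw
      rw [hfm] at hw
      have hG : G.Adj y (f w) := by
        rcases sup_edge_adj G z x' y (f w) hw with h | ⟨h1, _⟩ | ⟨h1, _⟩
        · exact h
        · exact absurd h1 hyz.ne
        · exact absurd h1 hyx'
      rcases hny3 _ hG with h | h | h
      · exact absurd h (hxnr w)
      · exact Or.inl h
      · exact Or.inr h
    have hm1 := hstep (m+1) (f.map_adj (adj_succ n m))
    have hm2 := hstep (m-1) (f.map_adj (adj_pred n m))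
    have hnem : f (m+1) ≠ f (m-1) := fun h => two_step n m (hinj h)
    have hjn : ∀ u, (G ⊔ fromEdgeSet {s(z,x')}).Adj (f j) u → u = y' ∨ u = z := by
      rw [hfj]; exact hnbj
    rcases two_nbrs n f hinj j y' z hjn with ⟨hj1, hj2⟩ | ⟨hj1, hj2⟩ <;>
      rcases hm1 with hA | hA <;> rcases hm2 with hB | hB
    · exact hnem (hA.trans hB.symm)
    · -- J1: f(m+1)=y'=f(j+1), f(m-1)=z=f(j-1) ⇒ m = j
      have e1 : m + 1 = j + 1 := hinj (by rw [hA, hj1])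
      exact hmj (add_right_cancel e1)
    · -- J1: f(m+1)=z=f(j-1), f(m-1)=y'=f(j+1) ⇒ 4 = 0
      have e1 : m + 1 = j - 1 := hinj (by rw [hA, hj2])
      have e2 : m - 1 = j + 1 := hinj (by rw [hB, hj1])
      exact natCast_ne_zero' n 4 (by norm_num) (by omega)
        (by push_cast; linear_combination e1 - e2)
    · exact hnem (hA.trans hB.symm)
    · exact hnem (hA.trans hB.symm)
    · -- J2: f(m+1)=y'=f(j-1), f(m-1)=z=f(j+1) ⇒ 4 = 0
      have e1 : m + 1 = j - 1 := hinj (by rw [hA, hj2])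
      have e2 : m - 1 = j + 1 := hinj (by rw [hB, hj1])
      exact natCast_ne_zero' n 4 (by norm_num) (by omega)
        (by push_cast; linear_combination e1 - e2)
    · -- J2: f(m+1)=z=f(j+1), f(m-1)=y'=f(j-1) ⇒ m = j
      have e1 : m + 1 = j + 1 := hinj (by rw [hA, hj1])
      exact hmj (add_right_cancel e1)
    · exact hnem (hA.trans hB.symm)
  · push_neg at hyr
    classical
    apply hsat.1
    refine ⟨⟨fun w => if f w = x' then y else f w, fun {a b} hab => ?_⟩, ?_⟩
    · have hH : (G ⊔ fromEdgeSet {s(z,x')}).Adj (f a) (f b) := f.map_adj hab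
      have hne : f a ≠ f b := hH.ne
      show G.Adj (if f a = x' then y else f a) (if f b = x' then y else f b)
      by_cases ha : f a = x' <;> by_cases hb : f b = x'
      · exact absurd (ha.trans hb.symm) hne
      · rw [if_pos ha, if_neg hb]
        rw [ha] at hH
        rcases hnbj _ hH with h | h
        · rw [h]; exact hadj
        · rw [h]; exact hyz
      · rw [if_neg ha, if_pos hb]
        rw [hb] at hH
        rcases hnbj _ hH.symm with h | h
        · rw [h]; exact hadj.symm
        · rw [h]; exact hyz.symm
      · rw [if_neg ha, if_neg hb]
        rcases sup_edge_adj G z x' (f a) (f b) hH with h | ⟨_, h2⟩ | ⟨h1, _⟩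
        · exact h
        · exact absurd h2 hb
        · exact absurd h1 ha
    · intro a b h
      have h' : (if f a = x' then y else f a) = (if f b = x' then y else f b) := h
      by_cases ha : f a = x' <;> by_cases hb : f b = x'
      · exact hinj (ha.trans hb.symm)
      · rw [if_pos ha, if_neg hb] at h'
        exact absurd h'.symm (hyr b)
      · rw [if_neg ha, if_pos hb] at h'
        exact absurd h' (hyr a)
      · rw [if_neg ha, if_neg hb] at h'
        exact hinj h'
end

section
/- Let k ≥ 5 and let G be a C_k-saturated graph. Let P = u_0 u_1 … u_ℓ be a path in G with ℓ ≥ 2 such that every vertex u_i of P has degree two in G. Then u_0 and u_ℓ have no common neighbor in V(G) \ V(P). -/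
open SimpleGraph

open Fin.NatCast Fin.CommRing

namespace MyAux
variable {V : Type*} {G : SimpleGraph V}


lemma getVert_injOn' {a b : V} {p : G.Walk a b} (hp : p.IsPath) :
    ∀ i, i ≤ p.length → ∀ j, j ≤ p.length → p.getVert i = p.getVert j → i = j := by
  induction p with
  | nil => intro i hi j hj _; simp at hi hj; omega
  | @cons u v w h q ih =>
    rw [Walk.cons_isPath_iff] at hp
    intro i hi j hj hij
    match i, j with
    | 0, 0 => rfl
    | 0, j + 1 =>
      exfalso
      apply hp.2
      rw [Walk.getVert_zero, Walk.getVert_cons_succ] at hij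
      exact Walk.mem_support_iff_exists_getVert.mpr ⟨j, hij.symm, by simpa using hj⟩
    | i + 1, 0 =>
      exfalso
      apply hp.2
      rw [Walk.getVert_zero, Walk.getVert_cons_succ] at hij
      exact Walk.mem_support_iff_exists_getVert.mpr ⟨i, hij, by simpa using hi⟩
    | i + 1, j + 1 =>
      rw [Walk.getVert_cons_succ, Walk.getVert_cons_succ] at hij
      have := ih hp.1 i (by simpa using hi) j (by simpa using hj) hij
      omega



def cw {n : ℕ} : (j : Fin (n + 2)) → (m : ℕ) → (cycleGraph (n + 2)).Walk j (j + (m : Fin (n + 2)))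
  | _, 0 => Walk.nil.copy rfl (by simp)
  | j, m + 1 =>
      (Walk.cons (show (cycleGraph (n + 2)).Adj j (j + 1) by
          rw [cycleGraph_adj]; right; exact add_sub_cancel_left j 1)
        (cw (j + 1) m)).copy rfl (by push_cast; ring)

@[simp] lemma cw_length {n : ℕ} (j : Fin (n + 2)) (m : ℕ) : (cw j m).length = m := by
  induction m generalizing j with
  | zero => simp [cw]
  | succ m ih => simp [cw, ih]

lemma cw_support {n : ℕ} (j : Fin (n + 2)) (m : ℕ) :
    (cw j m).support = (List.range (m + 1)).map (fun (t : ℕ) => j + (t : Fin (n + 2))) := by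
  induction m generalizing j with
  | zero => simp [cw, List.range_succ]
  | succ m ih =>
    rw [show ((List.range (m + 1 + 1))) = 0 :: (List.range (m+1)).map Nat.succ from
      List.range_succ_eq_map]
    simp only [cw, Walk.support_copy, Walk.support_cons, ih, List.map_cons, List.map_map]
    refine List.cons_eq_cons.mpr ⟨by simp, ?_⟩
    apply List.map_congr_left
    intro t _
    simp only [Function.comp]
    push_cast
    ring

lemma cw_edges {n : ℕ} (j : Fin (n + 2)) (m : ℕ) :
    (cw j m).edges = (List.range m).map
      (fun (t : ℕ) => s(j + (t : Fin (n + 2)), j + (t : Fin (n + 2)) + 1)) := by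
  induction m generalizing j with
  | zero => simp [cw]
  | succ m ih =>
    rw [show ((List.range (m + 1))) = 0 :: (List.range m).map Nat.succ from
      List.range_succ_eq_map]
    simp only [cw, Walk.edges_copy, Walk.edges_cons, ih, List.map_cons, List.map_map]
    refine List.cons_eq_cons.mpr ⟨by simp, ?_⟩
    apply List.map_congr_left
    intro t _
    simp only [Function.comp]
    have h1 : j + 1 + ((t : ℕ) : Fin (n + 2)) = j + ((t + 1 : ℕ) : Fin (n + 2)) := by
      push_cast; ring
    rw [show (Nat.succ t : ℕ) = t + 1 from rfl, h1]

lemma cw_support_nodup {n : ℕ} (j : Fin (n + 2)) (m : ℕ) (hm : m < n + 2) :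
    ((cw j m).support).Nodup := by
  rw [cw_support]
  refine List.Nodup.map_on ?_ List.nodup_range
  intro s hs t ht hst
  rw [List.mem_range] at hs ht
  have h1 := congrArg Fin.val (add_left_cancel hst)
  rwa [Fin.val_cast_of_lt (by omega), Fin.val_cast_of_lt (by omega)] at h1

lemma sat_path {k : ℕ} (hk : 5 ≤ k) {V : Type*} {G : SimpleGraph V} {x y : V}
    (hfree : ¬ HasCopy (cycleGraph k) G)
    (hcopy : HasCopy (cycleGraph k) (G ⊔ fromEdgeSet {s(x, y)})) :
    ∃ q : G.Walk x y, q.IsPath ∧ q.length = k - 1 := by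
  obtain ⟨n, rfl⟩ : ∃ n, k = n + 2 := ⟨k - 2, by omega⟩
  obtain ⟨f, hf⟩ := hcopy
  by_cases hall : ∀ i : Fin (n + 2), G.Adj (f i) (f (i + 1))
  · exfalso
    refine hfree ⟨⟨f, ?_⟩, hf⟩
    intro u v huv
    rw [cycleGraph_adj] at huv
    rcases huv with h | h
    · have h' : u = v + 1 := by linear_combination h
      subst h'; exact (hall v).symm
    · have h' : v = u + 1 := by linear_combination h
      subst h'; exact hall u
  · push_neg at hall
    obtain ⟨j, hj⟩ := hall
    have hadjH : (G ⊔ fromEdgeSet {s(x, y)}).Adj (f j) (f (j + 1)) := by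
      apply f.map_adj
      rw [cycleGraph_adj]; right; exact add_sub_cancel_left j 1
    have hE : s(f j, f (j + 1)) = s(x, y) := by
      rw [sup_adj] at hadjH
      rcases hadjH with h | h
      · exact absurd h hj
      · rw [fromEdgeSet_adj, Set.mem_singleton_iff] at h
        exact h.1
    have hend : (j + 1) + ((n + 1 : ℕ) : Fin (n + 2)) = j := by
      have h0 : ((n + 2 : ℕ) : Fin (n + 2)) = 0 := Fin.natCast_self _
      push_cast at h0 ⊢
      linear_combination h0
    set W0 : (cycleGraph (n + 2)).Walk (j + 1) j := (cw (j + 1) (n + 1)).copy rfl hend with hW0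
    set W := W0.map f with hW
    have hedges : ∀ e ∈ W.edges, e ∈ G.edgeSet := by
      intro e he
      have heH := W.edges_subset_edgeSet he
      rw [edgeSet_sup] at heH
      rcases heH with h | h
      · exact h
      · exfalso
        rw [edgeSet_fromEdgeSet, Set.mem_diff, Set.mem_singleton_iff] at h
        have hexy : e = s(x, y) := h.1
        rw [hW, Walk.edges_map, List.mem_map] at he
        obtain ⟨e0, he0, rfl⟩ := he
        rw [hW0, Walk.edges_copy, cw_edges, List.mem_map] at he0
        obtain ⟨t, ht, rfl⟩ := he0
        rw [List.mem_range] at ht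
        have hexy2 : Sym2.map f s(j + 1 + (t : Fin (n+2)), j + 1 + (t : Fin (n+2)) + 1)
            = Sym2.map f s(j, j + 1) := by
          rw [hexy, Sym2.map_pair_eq]; exact hE.symm
        have heq := Sym2.map.injective hf hexy2
        rw [Sym2.eq_iff] at heq
        rcases heq with ⟨h1, _⟩ | ⟨h1, h2⟩
        · have h1' : ((1 + t : ℕ) : Fin (n + 2)) = ((0 : ℕ) : Fin (n + 2)) := by
            push_cast; linear_combination h1
          have hv := congrArg Fin.val h1'
          rw [Fin.val_cast_of_lt (by omega), Fin.val_cast_of_lt (by omega)] at hv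
          omega
        · have h1' : ((t : ℕ) : Fin (n + 2)) = ((0 : ℕ) : Fin (n + 2)) := by
            push_cast; linear_combination h1
          have hv := congrArg Fin.val h1'
          rw [Fin.val_cast_of_lt (by omega), Fin.val_cast_of_lt (by omega)] at hv
          have ht0 : t = 0 := hv
          rw [ht0] at h2
          have h2' : ((2 : ℕ) : Fin (n + 2)) = ((0 : ℕ) : Fin (n + 2)) := by
            push_cast; linear_combination h2
          have hv2 := congrArg Fin.val h2'
          rw [Fin.val_cast_of_lt (by omega), Fin.val_cast_of_lt (by omega)] at hv2
          omega
    set q1 := W.transfer G hedges with hq1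
    have hlen : q1.length = n + 1 := by
      rw [hq1, Walk.length_transfer, hW, Walk.length_map, hW0, Walk.length_copy, cw_length]
    have hpath : q1.IsPath := by
      apply Walk.IsPath.mk'
      rw [hq1, Walk.support_transfer, hW, Walk.support_map, hW0, Walk.support_copy]
      exact (cw_support_nodup _ _ (by omega)).map hf
    rw [Sym2.eq_iff] at hE
    rcases hE with ⟨h1, h2⟩ | ⟨h1, h2⟩
    · refine ⟨(q1.reverse).copy h1 h2, ?_, ?_⟩
      · rw [Walk.isPath_copy]; exact hpath.reverse
      · rw [Walk.length_copy, Walk.length_reverse, hlen]; omega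
    · refine ⟨q1.copy h2 h1, ?_, ?_⟩
      · rw [Walk.isPath_copy]; exact hpath
      · rw [Walk.length_copy, hlen]; omega

end MyAux

namespace MyAux
variable {V : Type*} {G : SimpleGraph V}

lemma getVert_one_mem_support {x y : V} {q : G.Walk x y} (hnil : ¬ q.Nil) :
    q.getVert 1 ∈ q.support :=
  Walk.mem_support_iff_exists_getVert.mpr ⟨1, rfl, Walk.not_nil_iff_lt_length.mp hnil⟩

lemma length_one_of_getVert_one_end {x y : V} {q : G.Walk x y} (hq : q.IsPath)
    (hnil : ¬ q.Nil) (h : q.getVert 1 = y) : q.length = 1 :=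
  (getVert_injOn' hq 1 (Walk.not_nil_iff_lt_length.mp hnil) q.length le_rfl
    (by rw [h, q.getVert_length])).symm

lemma length_zero_of_eq {x y : V} (q : G.Walk x y) (hq : q.IsPath) (hxy : x = y) :
    q.length = 0 := by
  subst hxy
  by_contra h
  have h1 : 1 ≤ q.length := by omega
  have := getVert_injOn' hq 0 (by omega) q.length le_rfl
    (by rw [q.getVert_zero, q.getVert_length])
  omega

lemma tail_path {x y : V} {q : G.Walk x y} (hq : q.IsPath) (hnil : ¬ q.Nil) {z : V}
    (hz : q.getVert 1 = z) :
    ∃ q' : G.Walk z y, q'.IsPath ∧ q'.length + 1 = q.length ∧ x ∉ q'.support ∧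
      ∀ v ∈ q'.support, v ∈ q.support := by
  refine ⟨q.tail.copy hz rfl, ?_, ?_, ?_, ?_⟩
  · rw [Walk.isPath_copy]; exact hq.tail
  · rw [Walk.length_copy]; exact Walk.length_tail_add_one hnil
  · rw [Walk.support_copy, Walk.support_tail_of_not_nil _ hnil]
    have h2 := hq.support_nodup
    rw [q.support_eq_cons] at h2
    exact (List.nodup_cons.mp h2).1
  · intro v hv
    rw [Walk.support_copy, Walk.support_tail_of_not_nil _ hnil] at hv
    rw [q.support_eq_cons]
    exact List.mem_cons_of_mem _ hv

end MyAux

open MyAux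

theorem no_common_neighbor_of_degree_two_path_endpoints
    (k : ℕ) (hk : 5 ≤ k) (V : Type) [Fintype V] (G : SimpleGraph V)
    (hsat : IsSat (cycleGraph k) G)
    (a b : V) (p : G.Walk a b) (hp : p.IsPath) (hlen : 2 ≤ p.length)
    (hdeg : ∀ v ∈ p.support, (G.neighborSet v).ncard = 2) :
    ¬ ∃ w : V, w ∉ p.support ∧ G.Adj a w ∧ G.Adj b w := by
  rintro ⟨w, hw, hwa, hwb⟩
  have ha0 : p.getVert 0 = a := p.getVert_zero
  have hbl : p.getVert p.length = b := p.getVert_length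
  have uinj := getVert_injOn' hp
  have umem : ∀ i, i ≤ p.length → p.getVert i ∈ p.support :=
    fun i hi => Walk.mem_support_iff_exists_getVert.mpr ⟨i, rfl, hi⟩
  have uadj : ∀ i, i < p.length → G.Adj (p.getVert i) (p.getVert (i + 1)) :=
    fun i hi => p.adj_getVert_succ hi
  have hane : ∀ i, i ≤ p.length → p.getVert i ≠ w := fun i hi h => hw (h ▸ umem i hi)
  have hab : a ≠ b := fun h => by
    have := uinj 0 (by omega) p.length le_rfl (by rw [ha0, hbl, h])
    omega
  have hbw : b ≠ w := by rw [← hbl]; exact hane p.length le_rfl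
  have nbrEq : ∀ v ∈ p.support, ∀ x y : V, G.Adj v x → G.Adj v y → x ≠ y →
      ∀ z, G.Adj v z → z = x ∨ z = y := by
    intro v hv x y hx hy hxy z hz
    have hsub : ({x, y} : Set V) ⊆ G.neighborSet v := by
      rintro t (rfl | rfl) <;> assumption
    have heq : ({x, y} : Set V) = G.neighborSet v :=
      Set.eq_of_subset_of_ncard_le hsub (by rw [hdeg v hv, Set.ncard_pair hxy]) (Set.toFinite _)
    have hzm : z ∈ ({x, y} : Set V) := by rw [heq]; exact hz
    simpa using hzm
  -- interior neighbors
  have nbrsI : ∀ i z, 1 ≤ i → i < p.length → G.Adj (p.getVert i) z →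
      z = p.getVert (i - 1) ∨ z = p.getVert (i + 1) := by
    intro i z h1 h2 hz
    have hadj1 : G.Adj (p.getVert i) (p.getVert (i - 1)) := by
      have h3 := uadj (i - 1) (by omega)
      rw [show i - 1 + 1 = i from by omega] at h3
      exact h3.symm
    have hadj2 := uadj i h2
    have hne : p.getVert (i - 1) ≠ p.getVert (i + 1) := fun hEq => by
      have := uinj (i - 1) (by omega) (i + 1) (by omega) hEq
      omega
    exact nbrEq _ (umem i (by omega)) _ _ hadj1 hadj2 hne z hz
  have nbrs0 : ∀ z, G.Adj a z → z = p.getVert 1 ∨ z = w := by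
    intro z hz
    have hadj1 : G.Adj a (p.getVert 1) := by
      have := uadj 0 (by omega); rwa [ha0] at this
    exact nbrEq a p.start_mem_support _ _ hadj1 hwa (hane 1 (by omega)) z hz
  have nbrs0' : ∀ z, G.Adj (p.getVert 0) z → z = p.getVert 1 ∨ z = w := by
    intro z hz
    rw [ha0] at hz
    exact nbrs0 z hz
  have nbrsL : ∀ z, G.Adj b z → z = p.getVert (p.length - 1) ∨ z = w := by
    intro z hz
    have hadj1 : G.Adj b (p.getVert (p.length - 1)) := by
      have h3 := uadj (p.length - 1) (by omega)
      rw [show p.length - 1 + 1 = p.length from by omega, hbl] at h3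
      exact h3.symm
    exact nbrEq b p.end_mem_support _ _ hadj1 hwb (hane (p.length - 1) (by omega)) z hz
  -- forced paths to w
  have toW : ∀ i, i < p.length → ∀ q : G.Walk (p.getVert i) w, q.IsPath →
      p.getVert (i + 1) ∉ q.support → q.length = i + 1 ∧ a ∈ q.support := by
    intro i
    induction i with
    | zero =>
      intro _ q hq hav
      have hnil : ¬ q.Nil := Walk.not_nil_of_ne (hane 0 (by omega))
      have hadj := q.adj_snd hnil
      rcases nbrs0' _ hadj with h1 | h1
      · exact absurd (by rw [← h1]; exact getVert_one_mem_support hnil : p.getVert 1 ∈ q.support) (by simpa using hav)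
      · refine ⟨?_, ?_⟩
        · have := length_one_of_getVert_one_end hq hnil h1
          omega
        · exact Walk.mem_support_iff_exists_getVert.mpr
            ⟨0, by rw [q.getVert_zero, ha0], by omega⟩
    | succ i ih =>
      intro hi q hq hav
      have hnil : ¬ q.Nil := Walk.not_nil_of_ne (hane (i + 1) (by omega))
      have hadj := q.adj_snd hnil
      rcases nbrsI (i + 1) _ (by omega) hi hadj with h1 | h1
      · rw [show i + 1 - 1 = i from by omega] at h1
        obtain ⟨q', hq', hlen', hx', hsub'⟩ := tail_path hq hnil h1
        have IH := ih (by omega) q' hq' hx'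
        exact ⟨by omega, hsub' a IH.2⟩
      · exact absurd (by rw [← h1]; exact getVert_one_mem_support hnil : p.getVert (i + 1 + 1) ∈ q.support) hav
  -- forced paths to b
  have fromB : ∀ m i, i + m = p.length → 1 ≤ i → ∀ q : G.Walk (p.getVert i) b, q.IsPath →
      p.getVert (i - 1) ∉ q.support → q.length = m := by
    intro m
    induction m with
    | zero =>
      intro i hi _ q hq _
      exact length_zero_of_eq q hq (by rw [show i = p.length from by omega, hbl])
    | succ m ih =>
      intro i hi h1 q hq hav
      have hne : p.getVert i ≠ b := fun h => by
        have := uinj i (by omega) p.length le_rfl (by rw [h, hbl])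
        omega
      have hnil : ¬ q.Nil := Walk.not_nil_of_ne hne
      have hadj := q.adj_snd hnil
      rcases nbrsI i _ h1 (by omega) hadj with h2 | h2
      · exact absurd (by rw [← h2]; exact getVert_one_mem_support hnil : p.getVert (i - 1) ∈ q.support) hav
      · obtain ⟨q', hq', hlen', hx', _⟩ := tail_path hq hnil h2
        have hx'' : p.getVert (i + 1 - 1) ∉ q'.support := by
          rw [show i + 1 - 1 = i from by omega]; exact hx'
        have IH := ih (i + 1) (by omega) (by omega) q' hq' hx''
        omega
  -- paths from w to b avoiding a have length 1
  have wToB : ∀ q2 : G.Walk w b, q2.IsPath → a ∉ q2.support → q2.length = 1 := by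
    intro q2 hq2 hna
    have hr : q2.reverse.IsPath := hq2.reverse
    have hnil : ¬ q2.reverse.Nil := Walk.not_nil_of_ne hbw
    have hadj := q2.reverse.adj_snd hnil
    rcases nbrsL _ hadj with h3 | h3
    · exfalso
      obtain ⟨r', hr', hlen', hx', hsub'⟩ := tail_path hr hnil h3
      have hbnot : p.getVert (p.length - 1 + 1) ∉ r'.support := by
        rw [show p.length - 1 + 1 = p.length from by omega, hbl]; exact hx'
      have hmem0 := (toW (p.length - 1) (by omega) r' hr' hbnot).2
      have hmem : a ∈ q2.reverse.support := hsub' a hmem0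
      rw [Walk.support_reverse, List.mem_reverse] at hmem
      exact hna hmem
    · have h4 := length_one_of_getVert_one_end hr hnil h3
      rwa [Walk.length_reverse] at h4
  have classAB : ∀ q : G.Walk a b, q.IsPath → q.length = p.length ∨ q.length = 2 := by
    intro q hq
    have hnil : ¬ q.Nil := Walk.not_nil_of_ne hab
    have hadj := q.adj_snd hnil
    rcases nbrs0 _ hadj with h1 | h1
    · left
      obtain ⟨q', hq', hlen', hx', _⟩ := tail_path hq hnil h1
      have hx'' : p.getVert (1 - 1) ∉ q'.support := by
        rw [show (1 : ℕ) - 1 = 0 from rfl, ha0]; exact hx'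
      have := fromB (p.length - 1) 1 (by omega) (by omega) q' hq' hx''
      omega
    · right
      obtain ⟨q', hq', hlen', hx', _⟩ := tail_path hq hnil h1
      have := wToB q' hq' hx'
      omega
  have classU1 : 4 ≤ p.length → ∀ q : G.Walk (p.getVert 1) b, q.IsPath →
      q.length = p.length - 1 ∨ q.length = 3 := by
    intro h4 q hq
    have hne1 : p.getVert 1 ≠ b := fun h => by
      have := uinj 1 (by omega) p.length le_rfl (by rw [h, hbl]); omega
    have hnil : ¬ q.Nil := Walk.not_nil_of_ne hne1
    have hadj := q.adj_snd hnil
    rcases nbrsI 1 _ le_rfl (by omega) hadj with h1 | h1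
    · right
      rw [show (1 : ℕ) - 1 = 0 from rfl, ha0] at h1
      obtain ⟨q1, hq1, hlen1, hx1, _⟩ := tail_path hq hnil h1
      have hnil1 : ¬ q1.Nil := Walk.not_nil_of_ne hab
      have hadj1 := q1.adj_snd hnil1
      rcases nbrs0 _ hadj1 with h2 | h2
      · exact absurd (by rw [← h2]; exact getVert_one_mem_support hnil1) hx1
      · obtain ⟨q2, hq2, hlen2, hx2, _⟩ := tail_path hq1 hnil1 h2
        have := wToB q2 hq2 hx2
        omega
    · left
      obtain ⟨q', hq', hlen', hx', _⟩ := tail_path hq hnil h1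
      have hx'' : p.getVert (2 - 1) ∉ q'.support := hx'
      have := fromB (p.length - 2) 2 (by omega) (by omega) q' hq' hx''
      omega
  obtain ⟨hfree, hadd⟩ := hsat
  have hnadj : ¬ G.Adj a b := fun h => by
    rcases nbrs0 b h with h1 | h1
    · have := uinj p.length le_rfl 1 (by omega) (by rw [hbl]; exact h1); omega
    · exact hbw h1
  obtain ⟨q, hq, hqlen⟩ := MyAux.sat_path hk hfree (hadd a b hab hnadj)
  rcases classAB q hq with h1 | h1
  · have h4 : 4 ≤ p.length := by omega
    have hne1b : p.getVert 1 ≠ b := fun h => by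
      have := uinj 1 (by omega) p.length le_rfl (by rw [h, hbl]); omega
    have hnadj1 : ¬ G.Adj (p.getVert 1) b := fun h => by
      rcases nbrsI 1 b le_rfl (by omega) h with h2 | h2
      · have := uinj p.length le_rfl 0 (by omega) (by rw [hbl]; exact h2); omega
      · have := uinj p.length le_rfl 2 (by omega) (by rw [hbl]; exact h2); omega
    obtain ⟨q2, hq2, hq2len⟩ := MyAux.sat_path hk hfree (hadd _ b hne1b hnadj1)
    rcases classU1 h4 q2 hq2 with h2 | h2 <;> omega
  · omega
end
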